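/- arXiv:1606.02005 — 7 statements merged into one kernel-verified Lean document; each statement's English description precedes it below -/
import Mathlib

section
/- Define r(t,x) = min(Φ⁻¹(t⁻¹)^d, t Φ(|x|⁻¹)/|x|^d) and ρ(t,x) = Φ((1/Φ⁻¹(t⁻¹) + |x|)⁻¹) · (1/Φ⁻¹(t⁻¹) + |x|)^{-d}. Then for all t > 0 and x ∈ ℝ^d: t ρ(t,x) ≤ r(t,x) ≤ 2^{d+2} t ρ(t,x). -/
open Real
open scoped Classical

/-- The function `ρ(t,x) = Φ((1/Φ⁻¹(t⁻¹) + |x|)⁻¹) (1/Φ⁻¹(t⁻¹) + |x|)^{-d}`. -/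
noncomputable def rho (d : ℕ) (Φ Φinv : ℝ → ℝ) (t : ℝ)
    (x : EuclideanSpace ℝ (Fin d)) : ℝ :=
  Φ (((Φinv t⁻¹)⁻¹ + ‖x‖)⁻¹) / ((Φinv t⁻¹)⁻¹ + ‖x‖) ^ d

/-- The function `r(t,x) = min(Φ⁻¹(t⁻¹)^d, t Φ(|x|⁻¹)/|x|^d)`, interpreted as
`Φ⁻¹(t⁻¹)^d` at `x = 0`. -/
noncomputable def rfun (d : ℕ) (Φ Φinv : ℝ → ℝ) (t : ℝ)
    (x : EuclideanSpace ℝ (Fin d)) : ℝ :=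
  if x = 0 then (Φinv t⁻¹) ^ d
  else min ((Φinv t⁻¹) ^ d) (t * Φ (‖x‖⁻¹) / ‖x‖ ^ d)

/-- For all `t > 0` and `x ∈ ℝ^d`:
`t ρ(t,x) ≤ r(t,x) ≤ 2^{d+2} t ρ(t,x)`. -/
theorem stmt_4 (d : ℕ) (hd : 1 ≤ d) (Φ Φinv : ℝ → ℝ)
    (hΦpos : ∀ t : ℝ, 0 < t → 0 < Φ t)
    (hΦmono : ∀ s t : ℝ, 0 < s → s < t → Φ s < Φ t)
    (hinvpos : ∀ r : ℝ, 0 < r → 0 < Φinv r)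
    (hleft : ∀ t : ℝ, 0 < t → Φinv (Φ t) = t)
    (hright : ∀ r : ℝ, 0 < r → Φ (Φinv r) = r)
    (hup : ∀ lam r : ℝ, 1 ≤ lam → 0 < r → Φ (lam * r) ≤ lam ^ 2 * Φ r) :
    ∀ t : ℝ, 0 < t → ∀ x : EuclideanSpace ℝ (Fin d),
      t * rho d Φ Φinv t x ≤ rfun d Φ Φinv t x ∧
      rfun d Φ Φinv t x ≤ 2 ^ (d + 2) * (t * rho d Φ Φinv t x) := by
  intro t ht x
  have ht' : 0 < t⁻¹ := inv_pos.mpr ht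
  set a := Φinv t⁻¹ with ha
  have hapos : 0 < a := hinvpos _ ht'
  have hΦa : Φ a = t⁻¹ := hright _ ht'
  have hmono' : ∀ s r : ℝ, 0 < s → s ≤ r → Φ s ≤ Φ r := by
    intro s r hs hsr
    rcases eq_or_lt_of_le hsr with h | h
    · rw [h]
    · exact (hΦmono s r hs h).le
  have hx0 : 0 ≤ ‖x‖ := norm_nonneg x
  have hs : 0 < a⁻¹ := inv_pos.mpr hapos
  set u := a⁻¹ + ‖x‖ with hu
  have hupos : 0 < u := by positivity
  have huinv : 0 < u⁻¹ := inv_pos.mpr hupos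
  have hΦu : 0 < Φ u⁻¹ := hΦpos _ huinv
  have hrho : rho d Φ Φinv t x = Φ u⁻¹ / u ^ d := rfl
  have hquarter : ∀ c : ℝ, 0 < c → Φ c ≤ 4 * Φ (c / 2) := by
    intro c hc
    have h2 : (2 : ℝ) * (c / 2) = c := by ring
    have := hup 2 (c / 2) one_le_two (by positivity)
    rw [h2] at this
    linarith
  -- `t ρ ≤ a ^ d`
  have hua : u⁻¹ ≤ a := by
    have : a⁻¹ ≤ u := le_add_of_nonneg_right hx0
    calc u⁻¹ ≤ (a⁻¹)⁻¹ := inv_anti₀ hs this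
    _ = a := inv_inv a
  have h1 : t * rho d Φ Φinv t x ≤ a ^ d := by
    rw [hrho]
    have hnum : Φ u⁻¹ ≤ t⁻¹ := by rw [← hΦa]; exact hmono' _ _ huinv hua
    have hden : (a⁻¹) ^ d ≤ u ^ d := by
      exact pow_le_pow_left₀ hs.le (le_add_of_nonneg_right hx0) d
    calc t * (Φ u⁻¹ / u ^ d) ≤ t * (t⁻¹ / (a⁻¹) ^ d) := by
          apply mul_le_mul_of_nonneg_left _ ht.le
          exact div_le_div₀ ht'.le hnum (pow_pos hs d) hden
      _ = a ^ d := by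
          rw [inv_pow]
          field_simp
  -- left inequality
  constructor
  · by_cases hx : x = 0
    · rw [rfun, if_pos hx]; exact h1
    · rw [rfun, if_neg hx]
      have hxpos : 0 < ‖x‖ := norm_pos_iff.mpr hx
      refine le_min h1 ?_
      rw [hrho]
      have hnum : Φ u⁻¹ ≤ Φ (‖x‖⁻¹) := by
        apply hmono' _ _ huinv
        apply inv_anti₀ hxpos
        simp [hu]; linarith
      have hden : ‖x‖ ^ d ≤ u ^ d := by
        apply pow_le_pow_left₀ hx0
        simp [hu]; linarith
      have := div_le_div₀ (hΦpos _ (inv_pos.mpr hxpos)).le hnum (pow_pos hxpos d) hden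
      calc t * (Φ u⁻¹ / u ^ d) ≤ t * (Φ (‖x‖⁻¹) / ‖x‖ ^ d) :=
            mul_le_mul_of_nonneg_left this ht.le
        _ = t * Φ (‖x‖⁻¹) / ‖x‖ ^ d := by ring
  -- right inequality
  · by_cases hcase : ‖x‖ ≤ a⁻¹
    · -- u ≤ 2 a⁻¹, and rfun ≤ a ^ d
      have hule : u ≤ 2 * a⁻¹ := by simp [hu]; linarith
      have hinvge : a / 2 ≤ u⁻¹ := by
        have h1' : u⁻¹ ≥ (2 * a⁻¹)⁻¹ := inv_anti₀ hupos hule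
        have : (2 * a⁻¹)⁻¹ = a / 2 := by field_simp
        linarith [this ▸ h1']
      have hΦlow : t⁻¹ ≤ 4 * Φ u⁻¹ := by
        have h1' : Φ a ≤ 4 * Φ (a / 2) := hquarter a hapos
        have h2' : Φ (a / 2) ≤ Φ u⁻¹ := hmono' _ _ (by positivity) hinvge
        rw [hΦa] at h1'; linarith
      have hud : a ^ d * u ^ d ≤ 2 ^ d := by
        have : u ^ d ≤ (2 * a⁻¹) ^ d := pow_le_pow_left₀ hupos.le hule d
        calc a ^ d * u ^ d ≤ a ^ d * (2 * a⁻¹) ^ d :=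
              mul_le_mul_of_nonneg_left this (pow_nonneg hapos.le d)
          _ = 2 ^ d := by
              rw [← mul_pow]
              have h2a : a * (2 * a⁻¹) = 2 := by field_simp
              rw [h2a]
      have key : a ^ d * u ^ d ≤ 2 ^ (d + 2) * t * Φ u⁻¹ := by
        have h2' : (2 : ℝ) ^ d ≤ 2 ^ (d + 2) * t * Φ u⁻¹ := by
          have : (1 : ℝ) / 4 ≤ t * Φ u⁻¹ := by
            have := mul_le_mul_of_nonneg_left hΦlow ht.le
            rw [mul_inv_cancel₀ ht.ne'] at this
            linarith
          have hpow : (2 : ℝ) ^ (d + 2) = 2 ^ d * 4 := by rw [pow_add]; norm_num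
          calc (2 : ℝ) ^ d = 2 ^ d * 4 * (1 / 4) := by ring
            _ ≤ 2 ^ d * 4 * (t * Φ u⁻¹) := by
                apply mul_le_mul_of_nonneg_left this (by positivity)
            _ = 2 ^ (d + 2) * t * Φ u⁻¹ := by rw [hpow]; ring
        linarith
      have had : a ^ d ≤ 2 ^ (d + 2) * (t * rho d Φ Φinv t x) := by
        rw [hrho]
        calc a ^ d = (a ^ d * u ^ d) / u ^ d := by
              field_simp
          _ ≤ (2 ^ (d + 2) * t * Φ u⁻¹) / u ^ d := by
              gcongr
          _ = 2 ^ (d + 2) * (t * (Φ u⁻¹ / u ^ d)) := by ring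
      by_cases hx : x = 0
      · rw [rfun, if_pos hx]; exact had
      · rw [rfun, if_neg hx]; exact le_trans (min_le_left _ _) had
    · -- a⁻¹ < ‖x‖, so x ≠ 0
      push_neg at hcase
      have hxpos : 0 < ‖x‖ := lt_trans hs hcase
      have hx : x ≠ 0 := by
        intro h; rw [h] at hxpos; simp at hxpos
      rw [rfun, if_neg hx]
      set b := ‖x‖ with hb
      have hbinv : 0 < b⁻¹ := inv_pos.mpr hxpos
      have hule : u ≤ 2 * b := by simp [hu, hb]; linarith
      have hinvge : b⁻¹ / 2 ≤ u⁻¹ := by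
        have h1' : (2 * b)⁻¹ ≤ u⁻¹ := inv_anti₀ hupos hule
        have : (2 * b)⁻¹ = b⁻¹ / 2 := by field_simp
        linarith [this ▸ h1']
      have hΦlow : Φ b⁻¹ ≤ 4 * Φ u⁻¹ := by
        have h1' : Φ b⁻¹ ≤ 4 * Φ (b⁻¹ / 2) := hquarter _ hbinv
        have h2' : Φ (b⁻¹ / 2) ≤ Φ u⁻¹ := hmono' _ _ (by positivity) hinvge
        linarith
      have hud : u ^ d ≤ 2 ^ d * b ^ d := by
        have : u ^ d ≤ (2 * b) ^ d := pow_le_pow_left₀ hupos.le hule d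
        rw [mul_pow] at this; exact this
      have key : Φ b⁻¹ * u ^ d ≤ 2 ^ (d + 2) * Φ u⁻¹ * b ^ d := by
        have hpow : (2 : ℝ) ^ (d + 2) = 4 * 2 ^ d := by rw [pow_add]; ring
        calc Φ b⁻¹ * u ^ d ≤ (4 * Φ u⁻¹) * (2 ^ d * b ^ d) := by
              apply mul_le_mul hΦlow hud (pow_nonneg hupos.le d)
              positivity
          _ = 2 ^ (d + 2) * Φ u⁻¹ * b ^ d := by rw [hpow]; ring
      have goal2 : t * Φ b⁻¹ / b ^ d ≤ 2 ^ (d + 2) * (t * rho d Φ Φinv t x) := by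
        rw [hrho, div_le_iff₀ (pow_pos hxpos d)]
        have keyt : t * (Φ b⁻¹ * u ^ d) ≤ t * (2 ^ (d + 2) * Φ u⁻¹ * b ^ d) :=
          mul_le_mul_of_nonneg_left key ht.le
        have hune : (u : ℝ) ^ d ≠ 0 := (pow_pos hupos d).ne'
        rw [div_eq_mul_inv]
        calc t * Φ b⁻¹ = t * (Φ b⁻¹ * u ^ d) * (u ^ d)⁻¹ := by
              field_simp
          _ ≤ t * (2 ^ (d + 2) * Φ u⁻¹ * b ^ d) * (u ^ d)⁻¹ := by
              apply mul_le_mul_of_nonneg_right keyt (by positivity)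
          _ = 2 ^ (d + 2) * (t * (Φ u⁻¹ * (u ^ d)⁻¹)) * b ^ d := by ring
      exact le_trans (min_le_right _ _) goal2
end

section
/- Let T ≥ 1 and set c = (2(2/a₁)^{1/δ₁}/Φ⁻¹((2T)⁻¹))^{d+2}. Define ρ(t,x) = Φ((1/Φ⁻¹(t⁻¹)+|x|)⁻¹)(1/Φ⁻¹(t⁻¹)+|x|)^{-d}. Then for all 0 < s < t ≤ T and x, z ∈ ℝ^d: ρ(t-s, x-z) ρ(s, z) ≤ c (ρ(t-s, x-z) + ρ(s, z)) ρ(t, x). -/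
open Real

set_option maxHeartbeats 1000000

private lemma inv_le_mul_inv_aux {a b c : ℝ} (ha : 0 < a) (hb : 0 < b)
    (h : a ≤ c * b) : b⁻¹ ≤ c * a⁻¹ := by
  have h2 : a * (a⁻¹ * b⁻¹) ≤ c * b * (a⁻¹ * b⁻¹) :=
    mul_le_mul_of_nonneg_right h (by positivity)
  rw [show a * (a⁻¹ * b⁻¹) = b⁻¹ by field_simp,
    show c * b * (a⁻¹ * b⁻¹) = c * a⁻¹ by field_simp] at h2
  exact h2

/-- for `T ≥ 1`, `c = (2(2/a₁)^{1/δ₁}/Φ⁻¹((2T)⁻¹))^{d+2}`, all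
`0 < s < t ≤ T` and `x, z ∈ ℝ^d`:
`ρ(t-s, x-z) ρ(s, z) ≤ c (ρ(t-s, x-z) + ρ(s, z)) ρ(t, x)`. -/
theorem stmt_8 (d : ℕ) (hd : 1 ≤ d) (Φ Φinv : ℝ → ℝ) (a₁ δ₁ : ℝ)
    (hδ₁ : 0 < δ₁) (hδ₂ : δ₁ ≤ 2) (ha₁ : 0 < a₁) (ha₂ : a₁ < 1)
    (hΦpos : ∀ t : ℝ, 0 < t → 0 < Φ t)
    (hΦmono : ∀ s t : ℝ, 0 < s → s < t → Φ s < Φ t)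
    (hΦ1 : Φ 1 = 1)
    (hinvpos : ∀ r : ℝ, 0 < r → 0 < Φinv r)
    (hleft : ∀ t : ℝ, 0 < t → Φinv (Φ t) = t)
    (hright : ∀ r : ℝ, 0 < r → Φ (Φinv r) = r)
    (hup : ∀ lam r : ℝ, 1 ≤ lam → 0 < r → Φ (lam * r) ≤ lam ^ 2 * Φ r)
    (hlow : ∀ lam r : ℝ, 1 ≤ lam → 1 ≤ r → a₁ * lam ^ δ₁ * Φ r ≤ Φ (lam * r))
    (T : ℝ) (hT : 1 ≤ T) :
    ∀ s t : ℝ, 0 < s → s < t → t ≤ T → ∀ x z : EuclideanSpace ℝ (Fin d),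
      rho d Φ Φinv (t - s) (x - z) * rho d Φ Φinv s z ≤
        (2 * (2 / a₁) ^ ((1 : ℝ) / δ₁) / Φinv ((2 * T)⁻¹)) ^ (d + 2) *
          (rho d Φ Φinv (t - s) (x - z) + rho d Φ Φinv s z) * rho d Φ Φinv t x := by
  -- basic monotonicity facts
  have hinvmono : ∀ r₁ r₂ : ℝ, 0 < r₁ → r₁ ≤ r₂ → Φinv r₁ ≤ Φinv r₂ := by
    intro r₁ r₂ h1 h12
    by_contra hc
    push_neg at hc
    have h2 : 0 < r₂ := lt_of_lt_of_le h1 h12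
    have := hΦmono _ _ (hinvpos r₂ h2) hc
    rw [hright _ h2, hright _ h1] at this
    linarith
  have hΦle : ∀ a b : ℝ, 0 < a → a ≤ b → Φ a ≤ Φ b := by
    intro a b ha hab
    rcases eq_or_lt_of_le hab with h | h
    · exact le_of_eq (by rw [h])
    · exact (hΦmono a b ha h).le
  have hΦreflect : ∀ a b : ℝ, 0 < a → 0 < b → Φ a ≤ Φ b → a ≤ b := by
    intro a b ha hb h
    by_contra hc
    push_neg at hc
    exact absurd h (not_le.mpr (hΦmono b a hb hc))
  set A : ℝ := (2 / a₁) ^ ((1 : ℝ) / δ₁) with hAdef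
  have hA1 : 1 ≤ A := Real.one_le_rpow ((one_le_div ha₁).mpr (by linarith)) (by positivity)
  have hApos : 0 < A := lt_of_lt_of_le one_pos hA1
  have hAδ : a₁ * A ^ δ₁ = 2 := by
    rw [hAdef, ← Real.rpow_mul (by positivity), one_div, inv_mul_cancel₀ hδ₁.ne',
      Real.rpow_one]
    field_simp
  have hTpos : (0:ℝ) < 2 * T := by linarith
  have hQpos : 0 < Φinv ((2 * T)⁻¹) := hinvpos _ (by positivity)
  set Q : ℝ := Φinv ((2 * T)⁻¹) with hQdef
  have hQ1 : Q ≤ 1 := by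
    apply hΦreflect _ _ hQpos one_pos
    rw [hQdef, hright _ (by positivity), hΦ1]
    rw [inv_le_one_iff₀]
    right; linarith
  have hQinv : 1 ≤ Q⁻¹ := (one_le_inv₀ hQpos).mpr hQ1
  have hALQ : 1 ≤ A * Q⁻¹ := le_trans hA1 (le_mul_of_one_le_right hApos.le hQinv)
  -- doubling of Φinv
  have hdouble : ∀ m : ℝ, 0 < m → m ≤ T →
      Φinv m⁻¹ ≤ (A * Q⁻¹) * Φinv (2 * m)⁻¹ := by
    intro m hm hmT
    have h2m : (0:ℝ) < 2 * m := by linarith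
    have hq : 0 < Φinv (2 * m)⁻¹ := hinvpos _ (by positivity)
    set q := Φinv (2 * m)⁻¹ with hqdef
    have hΦq : Φ q = (2 * m)⁻¹ := hright _ (by positivity)
    have hkey : m⁻¹ ≤ Φ (A * Q⁻¹ * q) := by
      by_cases h1q : 1 ≤ q
      · have hlow' := hlow (A * Q⁻¹) q hALQ h1q
        rw [hΦq] at hlow'
        have hr : (2:ℝ) ≤ a₁ * (A * Q⁻¹) ^ δ₁ := by
          calc (2:ℝ) = a₁ * A ^ δ₁ := hAδ.symm
          _ ≤ a₁ * (A * Q⁻¹) ^ δ₁ := by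
              refine mul_le_mul_of_nonneg_left ?_ ha₁.le
              exact Real.rpow_le_rpow hApos.le
                (le_mul_of_one_le_right hApos.le hQinv) hδ₁.le
        have h1 : m⁻¹ = 2 * (2 * m)⁻¹ := by
          rw [mul_inv]; ring
        have h2 : 2 * (2 * m)⁻¹ ≤ a₁ * (A * Q⁻¹) ^ δ₁ * (2 * m)⁻¹ :=
          mul_le_mul_of_nonneg_right hr (by positivity)
        linarith
      · push_neg at h1q
        have hΦq1 : Φ q < 1 := by rw [← hΦ1]; exact hΦmono _ _ hq h1q
        rw [hΦq] at hΦq1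
        have hm2 : 1 < 2 * m := (inv_lt_one₀ h2m).mp hΦq1
        have hqQ : Q ≤ q := by
          rw [hQdef, hqdef]
          exact hinvmono _ _ (by positivity) (inv_anti₀ h2m (by linarith))
        have hAq : A ≤ A * Q⁻¹ * q := by
          have h1 : Q⁻¹ * Q ≤ Q⁻¹ * q := mul_le_mul_of_nonneg_left hqQ (by positivity)
          rw [inv_mul_cancel₀ hQpos.ne'] at h1
          calc A ≤ A * (Q⁻¹ * q) := le_mul_of_one_le_right hApos.le h1
          _ = A * Q⁻¹ * q := (mul_assoc _ _ _).symm
        have h1Aq : 1 ≤ A * Q⁻¹ * q := le_trans hA1 hAq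
        have hlow' := hlow (A * Q⁻¹ * q) 1 h1Aq le_rfl
        rw [mul_one, hΦ1, mul_one] at hlow'
        have hr : (2:ℝ) ≤ a₁ * (A * Q⁻¹ * q) ^ δ₁ := by
          calc (2:ℝ) = a₁ * A ^ δ₁ := hAδ.symm
          _ ≤ a₁ * (A * Q⁻¹ * q) ^ δ₁ := by
              refine mul_le_mul_of_nonneg_left ?_ ha₁.le
              exact Real.rpow_le_rpow hApos.le hAq hδ₁.le
        have hminv : m⁻¹ ≤ 2 := by
          have h3 : m⁻¹ ≤ ((2:ℝ)⁻¹)⁻¹ := inv_anti₀ (by norm_num) (by linarith)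
          simpa using h3
        linarith
    apply hΦreflect _ _ (hinvpos _ (inv_pos.mpr hm)) (by positivity)
    rw [hright _ (inv_pos.mpr hm)]
    exact hkey
  -- monotonicity of t ↦ (Φinv t⁻¹)⁻¹
  have hmono_h : ∀ τ₁ τ₂ : ℝ, 0 < τ₁ → τ₁ ≤ τ₂ → (Φinv τ₁⁻¹)⁻¹ ≤ (Φinv τ₂⁻¹)⁻¹ := by
    intro τ₁ τ₂ h1 h12
    have h2 : 0 < τ₂ := lt_of_lt_of_le h1 h12
    exact inv_anti₀ (hinvpos _ (inv_pos.mpr h2))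
      (hinvmono _ _ (inv_pos.mpr h2) (inv_anti₀ h1 h12))
  -- generic facts about f r = Φ r⁻¹ / r ^ d
  have hfpos : ∀ r : ℝ, 0 < r → 0 < Φ r⁻¹ / r ^ d := fun r hr =>
    div_pos (hΦpos _ (inv_pos.mpr hr)) (pow_pos hr d)
  have hanti : ∀ r₁ r₂ : ℝ, 0 < r₁ → r₁ ≤ r₂ →
      Φ r₂⁻¹ / r₂ ^ d ≤ Φ r₁⁻¹ / r₁ ^ d := by
    intro r₁ r₂ h1 h12
    have h2 : 0 < r₂ := lt_of_lt_of_le h1 h12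
    exact div_le_div₀ (le_of_lt (hΦpos _ (inv_pos.mpr h1)))
      (hΦle _ _ (inv_pos.mpr h2) (inv_anti₀ h1 h12))
      (pow_pos h1 d) (pow_le_pow_left₀ h1.le h12 d)
  -- main part
  intro s t hs hst htT x z
  simp only [rho]
  have ht : 0 < t := hs.trans hst
  have hts : 0 < t - s := by linarith
  have hhs : 0 < (Φinv s⁻¹)⁻¹ := inv_pos.mpr (hinvpos _ (inv_pos.mpr hs))
  have hhts : 0 < (Φinv (t - s)⁻¹)⁻¹ := inv_pos.mpr (hinvpos _ (inv_pos.mpr hts))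
  have hht : 0 < (Φinv t⁻¹)⁻¹ := inv_pos.mpr (hinvpos _ (inv_pos.mpr ht))
  set u : ℝ := (Φinv (t - s)⁻¹)⁻¹ + ‖x - z‖ with hu_def
  set v : ℝ := (Φinv s⁻¹)⁻¹ + ‖z‖ with hv_def
  set w : ℝ := (Φinv t⁻¹)⁻¹ + ‖x‖ with hw_def
  have hu : 0 < u := by positivity
  have hv : 0 < v := by positivity
  have hw : 0 < w := by positivity
  set M : ℝ := max u v with hMdef
  have hM : 0 < M := lt_of_lt_of_le hu (le_max_left _ _)
  set K : ℝ := 2 * A / Q with hKdef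
  have hKeq : K = 2 * (A * Q⁻¹) := by rw [hKdef, div_eq_mul_inv, mul_assoc]
  have hK2 : 2 ≤ K := by rw [hKeq]; linarith
  have hK1 : 1 ≤ K := by linarith
  have hKpos : 0 < K := by linarith
  -- w ≤ K * M
  set m : ℝ := max s (t - s) with hmdef
  have hm : 0 < m := lt_of_lt_of_le hs (le_max_left _ _)
  have hmT : m ≤ T := max_le (by linarith) (by linarith)
  have hms : s ≤ m := le_max_left _ _
  have hmts : t - s ≤ m := le_max_right _ _
  have ht2m : t ≤ 2 * m := by linarith
  have h2m : (0:ℝ) < 2 * m := by linarith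
  have hhm : 0 < (Φinv m⁻¹)⁻¹ := inv_pos.mpr (hinvpos _ (inv_pos.mpr hm))
  have hwt : (Φinv t⁻¹)⁻¹ ≤ (Φinv (2 * m)⁻¹)⁻¹ := hmono_h t (2 * m) ht ht2m
  have hd2 : (Φinv (2 * m)⁻¹)⁻¹ ≤ (A * Q⁻¹) * (Φinv m⁻¹)⁻¹ :=
    inv_le_mul_inv_aux (hinvpos _ (inv_pos.mpr hm)) (hinvpos _ (inv_pos.mpr h2m))
      (hdouble m hm hmT)
  have hhm_le : (Φinv m⁻¹)⁻¹ + ‖x - z‖ + ‖z‖ ≤ u + v := by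
    rcases max_cases s (t - s) with ⟨heq, _⟩ | ⟨heq, _⟩ <;>
      rw [hmdef, heq, hu_def, hv_def] <;>
      linarith [hhts.le, hhs.le, norm_nonneg (x - z), norm_nonneg z]
  have hxnorm : ‖x‖ ≤ ‖x - z‖ + ‖z‖ := by
    simpa using norm_add_le (x - z) z
  have hKM : w ≤ K * M := by
    have e1 : (Φinv t⁻¹)⁻¹ ≤ (A * Q⁻¹) * (Φinv m⁻¹)⁻¹ := hwt.trans hd2
    have e2 : ‖x - z‖ + ‖z‖ ≤ (A * Q⁻¹) * (‖x - z‖ + ‖z‖) :=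
      le_mul_of_one_le_left (by positivity) hALQ
    have h1 : w ≤ (A * Q⁻¹) * (Φinv m⁻¹)⁻¹ + (A * Q⁻¹) * (‖x - z‖ + ‖z‖) := by
      rw [hw_def]; linarith
    have h1' : w ≤ (A * Q⁻¹) * ((Φinv m⁻¹)⁻¹ + ‖x - z‖ + ‖z‖) := by
      calc w ≤ (A * Q⁻¹) * (Φinv m⁻¹)⁻¹ + (A * Q⁻¹) * (‖x - z‖ + ‖z‖) := h1
      _ = (A * Q⁻¹) * ((Φinv m⁻¹)⁻¹ + ‖x - z‖ + ‖z‖) := by ring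
    have h2 : u + v ≤ 2 * M := by
      have h3 := le_max_left u v
      have h4 := le_max_right u v
      rw [hMdef]; linarith
    calc w ≤ (A * Q⁻¹) * (u + v) :=
          le_trans h1' (mul_le_mul_of_nonneg_left hhm_le (by positivity))
    _ ≤ (A * Q⁻¹) * (2 * M) := mul_le_mul_of_nonneg_left h2 (by positivity)
    _ = K * M := by rw [hKeq]; ring
  -- scaling of f
  have hscale : Φ M⁻¹ / M ^ d ≤ K ^ (d + 2) * (Φ (K * M)⁻¹ / (K * M) ^ d) := by
    have h1 : Φ M⁻¹ ≤ K ^ 2 * Φ (K * M)⁻¹ := by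
      have h0 := hup K (K * M)⁻¹ hK1 (by positivity)
      rw [show K * (K * M)⁻¹ = M⁻¹ by
        rw [mul_inv]; field_simp] at h0
      exact h0
    have heq : K ^ (d + 2) * (Φ (K * M)⁻¹ / (K * M) ^ d) = K ^ 2 * Φ (K * M)⁻¹ / M ^ d := by
      rw [mul_pow, pow_add]
      field_simp
    rw [heq]
    exact (div_le_div_iff_of_pos_right (pow_pos hM d)).mpr h1
  have hfw : Φ (K * M)⁻¹ / (K * M) ^ d ≤ Φ w⁻¹ / w ^ d := hanti w (K * M) hw hKM
  have hmain : min (Φ u⁻¹ / u ^ d) (Φ v⁻¹ / v ^ d) ≤ K ^ (d + 2) * (Φ w⁻¹ / w ^ d) := by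
    have h1 : min (Φ u⁻¹ / u ^ d) (Φ v⁻¹ / v ^ d) ≤ Φ M⁻¹ / M ^ d := by
      rcases max_cases u v with ⟨heq, _⟩ | ⟨heq, _⟩ <;> rw [hMdef, heq]
      · exact min_le_left _ _
      · exact min_le_right _ _
    calc min (Φ u⁻¹ / u ^ d) (Φ v⁻¹ / v ^ d) ≤ Φ M⁻¹ / M ^ d := h1
    _ ≤ K ^ (d + 2) * (Φ (K * M)⁻¹ / (K * M) ^ d) := hscale
    _ ≤ K ^ (d + 2) * (Φ w⁻¹ / w ^ d) := mul_le_mul_of_nonneg_left hfw (by positivity)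
  have hfu : 0 < Φ u⁻¹ / u ^ d := hfpos u hu
  have hfv : 0 < Φ v⁻¹ / v ^ d := hfpos v hv
  have hfw' : 0 < Φ w⁻¹ / w ^ d := hfpos w hw
  have hKd : 0 < K ^ (d + 2) := pow_pos hKpos _
  set fu : ℝ := Φ u⁻¹ / u ^ d with hfu_def
  set fv : ℝ := Φ v⁻¹ / v ^ d with hfv_def
  set fw : ℝ := Φ w⁻¹ / w ^ d with hfw_def
  rcases min_cases fu fv with ⟨hmin, hle⟩ | ⟨hmin, hle⟩ <;> rw [hmin] at hmain
  · calc fu * fv ≤ (K ^ (d + 2) * fw) * fv := mul_le_mul_of_nonneg_right hmain hfv.le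
    _ = K ^ (d + 2) * fv * fw := by ring
    _ ≤ K ^ (d + 2) * (fu + fv) * fw := by
        refine mul_le_mul_of_nonneg_right ?_ hfw'.le
        exact mul_le_mul_of_nonneg_left (by linarith) hKd.le
  · calc fu * fv ≤ fu * (K ^ (d + 2) * fw) := mul_le_mul_of_nonneg_left hmain hfu.le
    _ = K ^ (d + 2) * fu * fw := by ring
    _ ≤ K ^ (d + 2) * (fu + fv) * fw := by
        refine mul_le_mul_of_nonneg_right ?_ hfw'.le
        exact mul_le_mul_of_nonneg_left (by linarith) hKd.le
end

section
/- Let ρ be as defined from Φ. For every T ≥ 1, every x ∈ ℝ^d and 0 < t/2 ≤ s ≤ t ≤ T: ρ(t,x) ≤ ρ(s,x) ≤ 2c ρ(t,x), where c = (2(2/a₁)^{1/δ₁}/Φ⁻¹((2T)⁻¹))^{d+2}. -/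
open Real

/-- For every `T ≥ 1`, every `x ∈ ℝ^d` and `0 < t/2 ≤ s ≤ t ≤ T`:
`ρ(t,x) ≤ ρ(s,x) ≤ 2c ρ(t,x)`, where `c = (2(2/a₁)^{1/δ₁}/Φ⁻¹((2T)⁻¹))^{d+2}`. -/
theorem stmt_9 (d : ℕ) (hd : 1 ≤ d) (Φ Φinv : ℝ → ℝ) (a₁ δ₁ : ℝ)
    (hδ₁ : 0 < δ₁) (hδ₂ : δ₁ ≤ 2) (ha₁ : 0 < a₁) (ha₂ : a₁ < 1)
    (hΦpos : ∀ t : ℝ, 0 < t → 0 < Φ t)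
    (hΦmono : ∀ s t : ℝ, 0 < s → s < t → Φ s < Φ t)
    (hΦ1 : Φ 1 = 1)
    (hinvpos : ∀ r : ℝ, 0 < r → 0 < Φinv r)
    (hleft : ∀ t : ℝ, 0 < t → Φinv (Φ t) = t)
    (hright : ∀ r : ℝ, 0 < r → Φ (Φinv r) = r)
    (hup : ∀ lam r : ℝ, 1 ≤ lam → 0 < r → Φ (lam * r) ≤ lam ^ 2 * Φ r)
    (hlow : ∀ lam r : ℝ, 1 ≤ lam → 1 ≤ r → a₁ * lam ^ δ₁ * Φ r ≤ Φ (lam * r))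
    (T : ℝ) (hT : 1 ≤ T) :
    ∀ s t : ℝ, 0 < t → t / 2 ≤ s → s ≤ t → t ≤ T → ∀ x : EuclideanSpace ℝ (Fin d),
      rho d Φ Φinv t x ≤ rho d Φ Φinv s x ∧
      rho d Φ Φinv s x ≤
        2 * (2 * (2 / a₁) ^ ((1 : ℝ) / δ₁) / Φinv ((2 * T)⁻¹)) ^ (d + 2) *
          rho d Φ Φinv t x := by
  intro s t ht hts hst htT x
  have hs : 0 < s := lt_of_lt_of_le (by linarith) hts
  have hΦle : ∀ a b : ℝ, 0 < a → a ≤ b → Φ a ≤ Φ b := by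
    intro a b ha hab
    rcases eq_or_lt_of_le hab with h | h
    · rw [h]
    · exact (hΦmono a b ha h).le
  have hinvmono : ∀ a b : ℝ, 0 < a → a ≤ b → Φinv a ≤ Φinv b := by
    intro a b ha hab
    by_contra h
    push_neg at h
    have hb : 0 < b := lt_of_lt_of_le ha hab
    have h2 := hΦmono _ _ (hinvpos b hb) h
    rw [hright a ha, hright b hb] at h2
    linarith
  simp only [rho]
  set lam0 : ℝ := (2 / a₁) ^ ((1 : ℝ) / δ₁) with hlam0def
  set m : ℝ := Φinv ((2 * T)⁻¹) with hmdef
  set K : ℝ := 2 * lam0 / m with hKdef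
  set r : ℝ := Φinv t⁻¹ with hrdef
  set R : ℝ := Φinv s⁻¹ with hRdef
  set A : ℝ := r⁻¹ + ‖x‖ with hAdef
  set B : ℝ := R⁻¹ + ‖x‖ with hBdef
  have ht0 : (0:ℝ) < t⁻¹ := by positivity
  have hlam0pos : 0 < lam0 := by rw [hlam0def]; positivity
  have hrpos : 0 < r := by rw [hrdef]; exact hinvpos _ ht0
  have hRpos : 0 < R := by rw [hRdef]; exact hinvpos _ (by positivity)
  have hmpos : 0 < m := by rw [hmdef]; exact hinvpos _ (by positivity)
  have hrR : r ≤ R := by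
    rw [hrdef, hRdef]; exact hinvmono _ _ ht0 (inv_anti₀ hs hst)
  have hmr : m ≤ r := by
    rw [hmdef, hrdef]
    exact hinvmono _ _ (by positivity) (inv_anti₀ ht (by linarith))
  have hΦr : Φ r = t⁻¹ := by rw [hrdef]; exact hright _ ht0
  have hm1 : m ≤ 1 := by
    have h1 : Φinv 1 = 1 := by
      have h2 := hleft 1 one_pos
      rwa [hΦ1] at h2
    rw [hmdef]
    calc Φinv (2 * T)⁻¹ ≤ Φinv 1 :=
          hinvmono _ _ (by positivity) (inv_le_one_of_one_le₀ (by linarith))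
      _ = 1 := h1
  have hlam0 : 1 ≤ lam0 := by
    rw [hlam0def]
    apply Real.one_le_rpow
    · rw [le_div_iff₀ ha₁]; linarith
    · positivity
  have hpow : lam0 ^ δ₁ = 2 / a₁ := by
    rw [hlam0def, ← Real.rpow_mul (by positivity), one_div_mul_cancel hδ₁.ne',
      Real.rpow_one]
  have hR2 : R ≤ Φinv (2 * t⁻¹) := by
    rw [hRdef]
    apply hinvmono _ _ (by positivity)
    calc s⁻¹ ≤ (t / 2)⁻¹ := inv_anti₀ (by linarith) hts
      _ = 2 * t⁻¹ := by rw [inv_div, div_eq_mul_inv]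
  have hApos : 0 < A := by
    rw [hAdef]; exact add_pos_of_pos_of_nonneg (inv_pos.mpr hrpos) (norm_nonneg x)
  have hBpos : 0 < B := by
    rw [hBdef]; exact add_pos_of_pos_of_nonneg (inv_pos.mpr hRpos) (norm_nonneg x)
  have hBA : B ≤ A := by
    rw [hAdef, hBdef]; exact add_le_add_left (inv_anti₀ hrpos hrR) _
  clear_value lam0 m K r R A B
  have hlamΦ : 2 ≤ Φ lam0 := by
    have h := hlow lam0 1 hlam0 le_rfl
    rw [mul_one, hΦ1, mul_one, hpow] at h
    have e : a₁ * (2 / a₁) = 2 := by field_simp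
    rw [e] at h
    exact h
  constructor
  · exact div_le_div₀ (hΦpos _ (inv_pos.mpr hBpos)).le
      (hΦle _ _ (inv_pos.mpr hApos) (inv_anti₀ hBpos hBA)) (pow_pos hBpos d)
      (pow_le_pow_left₀ hBpos.le hBA d)
  · have hKey : R ≤ K * r := by
      rcases le_or_gt 1 r with hr1 | hr1
      · have h1 : 2 * t⁻¹ ≤ Φ (lam0 * r) := by
          have h := hlow lam0 r hlam0 hr1
          rw [hpow, hΦr] at h
          have e : a₁ * (2 / a₁) * t⁻¹ = 2 * t⁻¹ := by field_simp
          rw [e] at h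
          exact h
        have h2 : Φinv (2 * t⁻¹) ≤ lam0 * r := by
          have h := hinvmono _ _ (by positivity) h1
          rwa [hleft _ (mul_pos hlam0pos hrpos)] at h
        have h3 : lam0 * r ≤ K * r := by
          apply mul_le_mul_of_nonneg_right _ hrpos.le
          rw [hKdef, le_div_iff₀ hmpos]
          nlinarith
        linarith
      · have ht1 : t⁻¹ < 1 := by
          have h := hΦmono r 1 hrpos hr1
          rwa [hΦ1, hΦr] at h
        have h1 : 2 * t⁻¹ ≤ Φ lam0 := by linarith
        have h2 : Φinv (2 * t⁻¹) ≤ lam0 := by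
          have h := hinvmono _ _ (by positivity) h1
          rwa [hleft _ hlam0pos] at h
        have h3 : lam0 ≤ K * r := by
          rw [hKdef, div_mul_eq_mul_div, le_div_iff₀ hmpos]
          nlinarith [mul_le_mul_of_nonneg_left hmr hlam0pos.le,
            mul_pos hlam0pos hrpos]
        linarith
    have hKpos : 0 < K := by rw [hKdef]; exact div_pos (by linarith) hmpos
    have hK1 : 1 ≤ K := by
      rw [hKdef, le_div_iff₀ hmpos]
      linarith
    have hrinv : r⁻¹ ≤ K * R⁻¹ := by
      calc r⁻¹ = r⁻¹ * R⁻¹ * R := by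
            rw [mul_assoc, inv_mul_cancel₀ hRpos.ne', mul_one]
        _ ≤ r⁻¹ * R⁻¹ * (K * r) := by
            apply mul_le_mul_of_nonneg_left hKey
            positivity
        _ = r⁻¹ * r * (R⁻¹ * K) := by ring
        _ = K * R⁻¹ := by rw [inv_mul_cancel₀ hrpos.ne']; ring
    have hAB : A ≤ K * B := by
      have hx : ‖x‖ ≤ K * ‖x‖ := le_mul_of_one_le_left (norm_nonneg x) hK1
      have e : K * B = K * R⁻¹ + K * ‖x‖ := by rw [hBdef]; ring
      rw [e, hAdef]
      exact add_le_add hrinv hx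
    have hABK : A / B ≤ K := (div_le_iff₀ hBpos).mpr hAB
    have hBinv : B⁻¹ = (A / B) * A⁻¹ := by
      rw [div_mul_eq_mul_div, mul_inv_cancel₀ hApos.ne', one_div]
    have hΦB : Φ B⁻¹ ≤ (A / B) ^ 2 * Φ A⁻¹ := by
      rw [hBinv]
      exact hup (A / B) A⁻¹ ((one_le_div hBpos).mpr hBA) (inv_pos.mpr hApos)
    have hΦApos : 0 < Φ A⁻¹ := hΦpos _ (inv_pos.mpr hApos)
    calc Φ B⁻¹ / B ^ d ≤ ((A / B) ^ 2 * Φ A⁻¹) / B ^ d :=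
          (div_le_div_iff_of_pos_right (pow_pos hBpos d)).mpr hΦB
      _ = (A / B) ^ (d + 2) * (Φ A⁻¹ / A ^ d) := by
          have hBne := hBpos.ne'
          have hAne := hApos.ne'
          rw [div_pow]
          generalize Φ A⁻¹ = c
          field_simp
          have hB2 : B ^ 2 * B⁻¹ ^ 2 = 1 := by rw [← mul_pow, mul_inv_cancel₀ hBne, one_pow]
          have hBd : B ^ d * B⁻¹ ^ d = 1 := by rw [← mul_pow, mul_inv_cancel₀ hBne, one_pow]
          linear_combination (-(A ^ 2 * A ^ d * c)) * hB2 + (-(A ^ 2 * A ^ d * c) * (B ^ 2 * B⁻¹ ^ 2)) * hBd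
      _ ≤ K ^ (d + 2) * (Φ A⁻¹ / A ^ d) := by
          apply mul_le_mul_of_nonneg_right
            (pow_le_pow_left₀ (div_nonneg hApos.le hBpos.le) hABK _)
          exact div_nonneg hΦApos.le (pow_pos hApos d).le
      _ ≤ 2 * K ^ (d + 2) * (Φ A⁻¹ / A ^ d) := by
          have h1 : 0 ≤ K ^ (d + 2) := pow_nonneg hKpos.le _
          have h2 : 0 ≤ Φ A⁻¹ / A ^ d := div_nonneg hΦApos.le (pow_pos hApos d).le
          have h3 : K ^ (d + 2) ≤ 2 * K ^ (d + 2) := by linarith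
          exact mul_le_mul_of_nonneg_right h3 h2
end

section
/- Let β, γ ≥ 0 and η, θ ∈ ℝ with β/2 + 1 − θ > 0 and γ/2 + 1 − η > 0. Suppose Φ⁻¹ satisfies Φ⁻¹(λr) ≥ λ^{1/2}Φ⁻¹(r) for λ ≥ 1, r > 0. Then for every t > 0: ∫₀ᵗ u^{-η} Φ⁻¹(u⁻¹)^{-γ} (t−u)^{-θ} Φ⁻¹((t−u)⁻¹)^{-β} du ≤ B(β/2+1−θ, γ/2+1−η) · t^{1−η−θ} Φ⁻¹(t⁻¹)^{-γ−β}, where B denotes the Beta function. -/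
open Real MeasureTheory Set

lemma rbeta_conv_left {p : ℝ} (hp : -1 < p) (q : ℝ) :
    IntervalIntegrable (fun x : ℝ => x ^ p * (1 - x) ^ q) volume 0 (1 / 2) := by
  apply IntervalIntegrable.mul_continuousOn
  · exact intervalIntegral.intervalIntegrable_rpow' hp
  · apply continuousOn_of_forall_continuousAt
    intro x hx
    rw [uIcc_of_le (by positivity : (0 : ℝ) ≤ 1 / 2)] at hx
    exact ((continuous_const.sub continuous_id).continuousAt).rpow_const
      (Or.inl (by intro h; simp only [Pi.sub_apply, id] at h; linarith [hx.2]))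

lemma rbeta_conv {p q : ℝ} (hp : -1 < p) (hq : -1 < q) :
    IntervalIntegrable (fun x : ℝ => x ^ p * (1 - x) ^ q) volume 0 1 := by
  refine (rbeta_conv_left hp q).trans ?_
  rw [IntervalIntegrable.iff_comp_neg]
  convert ((rbeta_conv_left hq p).comp_add_right 1).symm using 1
  · ext1 x
    conv_lhs => rw [mul_comm]
    congr 2 <;> ring
  · norm_num
  · norm_num

lemma rbeta_symm (p q : ℝ) :
    ∫ x in (0:ℝ)..1, x ^ p * (1 - x) ^ q = ∫ x in (0:ℝ)..1, x ^ q * (1 - x) ^ p := by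
  have := intervalIntegral.integral_comp_mul_add (a := 0) (b := 1) (c := -1)
    (fun x : ℝ => x ^ p * (1 - x) ^ q) neg_one_lt_zero.ne 1
  rw [inv_neg, inv_one, neg_one_smul, ← intervalIntegral.integral_symm] at this
  simp only [neg_mul, one_mul, sub_add_cancel_right, neg_neg,
    mul_one, neg_add_cancel, mul_zero, zero_add] at this
  conv_lhs at this => arg 1; intro x; rw [add_comm, ← sub_eq_add_neg, mul_comm]
  exact this.symm

lemma rbeta_scaled (p q : ℝ) {t : ℝ} (ht : 0 < t) :
    ∫ x in (0:ℝ)..t, x ^ p * (t - x) ^ q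
      = t ^ (p + q + 1) * ∫ x in (0:ℝ)..1, x ^ p * (1 - x) ^ q := by
  have A : t ^ (p + q + 1) = t * (t ^ p * t ^ q) := by
    rw [(by ring : p + q + 1 = 1 + p + q), rpow_add ht, rpow_add ht, rpow_one, mul_assoc]
  rw [A, mul_assoc, ← intervalIntegral.integral_const_mul, ← smul_eq_mul,
    ← zero_div t, ← div_self ht.ne', ← intervalIntegral.integral_comp_div _ ht.ne', zero_div]
  simp_rw [intervalIntegral.integral_of_le ht.le]
  refine setIntegral_congr_fun measurableSet_Ioc fun x hx => ?_
  rw [mul_mul_mul_comm]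
  congr 1
  · rw [← Real.mul_rpow ht.le (div_pos hx.1 ht).le, mul_div_cancel₀ _ ht.ne']
  · rw [div_self ht.ne', ← Real.mul_rpow ht.le (sub_nonneg.mpr <| (div_le_one ht).mpr hx.2),
      mul_sub, mul_one, mul_div_cancel₀ _ ht.ne']

lemma ptwise (Φinv : ℝ → ℝ)
    (hinvpos : ∀ r : ℝ, 0 < r → 0 < Φinv r)
    (hscale : ∀ lam r : ℝ, 1 ≤ lam → 0 < r →
      lam ^ ((1 : ℝ) / 2) * Φinv r ≤ Φinv (lam * r))
    {γ : ℝ} (hγ : 0 ≤ γ) {t u : ℝ} (ht : 0 < t) (hu : 0 < u) (hut : u ≤ t) :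
    Φinv u⁻¹ ^ (-γ) ≤ u ^ (γ / 2) * (t ^ (-(γ / 2)) * Φinv t⁻¹ ^ (-γ)) := by
  have hlam : (1 : ℝ) ≤ t / u := (one_le_div hu).2 hut
  have h1 := hscale (t / u) t⁻¹ hlam (inv_pos.2 ht)
  rw [show t / u * t⁻¹ = u⁻¹ by field_simp] at h1
  have hΦt : 0 < Φinv t⁻¹ := hinvpos _ (inv_pos.2 ht)
  have hbpos : 0 < (t / u) ^ ((1 : ℝ) / 2) * Φinv t⁻¹ := by positivity
  have h2 := Real.rpow_le_rpow_of_nonpos hbpos h1 (neg_nonpos.2 hγ)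
  refine h2.trans_eq ?_
  rw [Real.mul_rpow (by positivity) hΦt.le,
    ← Real.rpow_mul (by positivity : (0:ℝ) ≤ t / u),
    div_eq_mul_inv, Real.mul_rpow ht.le (by positivity), Real.inv_rpow hu.le,
    ← Real.rpow_neg hu.le, show (1:ℝ)/2 * -γ = -(γ/2) by ring,
    show -(-(γ/2)) = γ/2 by ring]
  ring

/-- Let `β, γ ≥ 0` and `η, θ ∈ ℝ` with `β/2 + 1 − θ > 0` and
`γ/2 + 1 − η > 0`. If `Φ⁻¹` satisfies `Φ⁻¹(λr) ≥ λ^{1/2}Φ⁻¹(r)` for `λ ≥ 1, r > 0`,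
then for every `t > 0`:
`∫₀ᵗ u^{-η} Φ⁻¹(u⁻¹)^{-γ} (t−u)^{-θ} Φ⁻¹((t−u)⁻¹)^{-β} du
  ≤ B(β/2+1−θ, γ/2+1−η) · t^{1−η−θ} Φ⁻¹(t⁻¹)^{-γ−β}`,
where `B(a,b) = ∫₀¹ s^{a−1}(1−s)^{b−1} ds` is the Beta function. -/
theorem stmt_10 (Φinv : ℝ → ℝ)
    (hinvpos : ∀ r : ℝ, 0 < r → 0 < Φinv r)
    (hscale : ∀ lam r : ℝ, 1 ≤ lam → 0 < r →
      lam ^ ((1 : ℝ) / 2) * Φinv r ≤ Φinv (lam * r))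
    (β γ η θ : ℝ) (hβ : 0 ≤ β) (hγ : 0 ≤ γ)
    (hθ : 0 < β / 2 + 1 - θ) (hη : 0 < γ / 2 + 1 - η) :
    ∀ t : ℝ, 0 < t →
      (∫ u in Ioo (0 : ℝ) t,
          u ^ (-η) * Φinv u⁻¹ ^ (-γ) * (t - u) ^ (-θ) * Φinv (t - u)⁻¹ ^ (-β)) ≤
        (∫ s in Ioo (0 : ℝ) 1,
            s ^ (β / 2 + 1 - θ - 1) * (1 - s) ^ (γ / 2 + 1 - η - 1)) *
          t ^ (1 - η - θ) * Φinv t⁻¹ ^ (-γ - β) := by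
  intro t ht
  have hΦt : 0 < Φinv t⁻¹ := hinvpos _ (inv_pos.2 ht)
  set p : ℝ := γ / 2 - η with hpdef
  set q : ℝ := β / 2 - θ with hqdef
  have hp1 : -1 < p := by rw [hpdef]; linarith
  have hq1 : -1 < q := by rw [hqdef]; linarith
  set C : ℝ := t ^ (-(γ / 2)) * t ^ (-(β / 2)) * Φinv t⁻¹ ^ (-γ - β) with hCdef
  -- pointwise bound
  have hbound : ∀ u ∈ Ioo (0:ℝ) t,
      u ^ (-η) * Φinv u⁻¹ ^ (-γ) * (t - u) ^ (-θ) * Φinv (t - u)⁻¹ ^ (-β)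
        ≤ u ^ p * (t - u) ^ q * C := by
    intro u hu
    obtain ⟨hu0, hut⟩ := hu
    have htu : 0 < t - u := by linarith
    have h1 := ptwise Φinv hinvpos hscale hγ ht hu0 hut.le
    have h2 := ptwise Φinv hinvpos hscale hβ ht htu (by linarith)
    have hΦu : 0 < Φinv u⁻¹ := hinvpos _ (inv_pos.2 hu0)
    have hΦtu : 0 < Φinv (t - u)⁻¹ := hinvpos _ (inv_pos.2 htu)
    calc u ^ (-η) * Φinv u⁻¹ ^ (-γ) * (t - u) ^ (-θ) * Φinv (t - u)⁻¹ ^ (-β)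
        ≤ u ^ (-η) * (u ^ (γ / 2) * (t ^ (-(γ / 2)) * Φinv t⁻¹ ^ (-γ)))
            * (t - u) ^ (-θ)
            * ((t - u) ^ (β / 2) * (t ^ (-(β / 2)) * Φinv t⁻¹ ^ (-β))) := by
          have h3 : u ^ (-η) * Φinv u⁻¹ ^ (-γ)
              ≤ u ^ (-η) * (u ^ (γ / 2) * (t ^ (-(γ / 2)) * Φinv t⁻¹ ^ (-γ))) :=
            mul_le_mul_of_nonneg_left h1 (by positivity)
          have h4 : (t - u) ^ (-θ) * Φinv (t - u)⁻¹ ^ (-β)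
              ≤ (t - u) ^ (-θ)
                * ((t - u) ^ (β / 2) * (t ^ (-(β / 2)) * Φinv t⁻¹ ^ (-β))) :=
            mul_le_mul_of_nonneg_left h2 (by positivity)
          calc u ^ (-η) * Φinv u⁻¹ ^ (-γ) * (t - u) ^ (-θ) * Φinv (t - u)⁻¹ ^ (-β)
              = (u ^ (-η) * Φinv u⁻¹ ^ (-γ))
                  * ((t - u) ^ (-θ) * Φinv (t - u)⁻¹ ^ (-β)) := by ring
            _ ≤ (u ^ (-η) * (u ^ (γ / 2) * (t ^ (-(γ / 2)) * Φinv t⁻¹ ^ (-γ))))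
                  * ((t - u) ^ (-θ)
                    * ((t - u) ^ (β / 2) * (t ^ (-(β / 2)) * Φinv t⁻¹ ^ (-β)))) := by
                apply mul_le_mul h3 h4 (by positivity) (by positivity)
            _ = _ := by ring
      _ = u ^ p * (t - u) ^ q * C := by
          rw [hCdef, hpdef, hqdef,
            show γ / 2 - η = -η + γ / 2 by ring, show β / 2 - θ = -θ + β / 2 by ring,
            Real.rpow_add hu0, Real.rpow_add htu,
            show -γ - β = -γ + -β by ring, Real.rpow_add hΦt]
          ring
  -- integrability of the dominating function
  have hint1 : IntervalIntegrable (fun s : ℝ => s ^ p * (1 - s) ^ q) volume 0 1 :=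
    rbeta_conv hp1 hq1
  have hint2 : IntervalIntegrable (fun x : ℝ => (t⁻¹ * x) ^ p * (1 - t⁻¹ * x) ^ q)
      volume 0 t := by
    have := hint1.comp_mul_left (c := t⁻¹)
    simpa using this
  have hgint : IntegrableOn (fun u : ℝ => u ^ p * (t - u) ^ q * C) (Ioo 0 t) volume := by
    have h := ((hint2.1.mono_set Ioo_subset_Ioc_self).const_mul (t ^ p * t ^ q * C))
    refine IntegrableOn.congr_fun h (fun u hu => ?_) measurableSet_Ioo
    obtain ⟨hu0, hut⟩ := hu
    have htu : 0 < t - u := by linarith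
    have e1 : (t⁻¹ * u) ^ p = t ^ (-p) * u ^ p := by
      rw [Real.mul_rpow (by positivity) hu0.le, Real.inv_rpow ht.le, ← Real.rpow_neg ht.le]
    have e2 : (1 - t⁻¹ * u) ^ q = t ^ (-q) * (t - u) ^ q := by
      rw [show 1 - t⁻¹ * u = t⁻¹ * (t - u) by field_simp,
        Real.mul_rpow (by positivity) htu.le, Real.inv_rpow ht.le, ← Real.rpow_neg ht.le]
    rw [e1, e2, show -p = p * (-1) by ring, show -q = q * (-1) by ring,
      Real.rpow_mul ht.le, Real.rpow_mul ht.le, Real.rpow_neg_one, Real.rpow_neg_one]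
    field_simp
  -- monotonicity of the integral
  have hle : (∫ u in Ioo (0 : ℝ) t,
      u ^ (-η) * Φinv u⁻¹ ^ (-γ) * (t - u) ^ (-θ) * Φinv (t - u)⁻¹ ^ (-β))
      ≤ ∫ u in Ioo (0 : ℝ) t, u ^ p * (t - u) ^ q * C := by
    refine integral_mono_of_nonneg ?_ hgint ?_
    · refine (ae_restrict_iff' measurableSet_Ioo).2 (ae_of_all _ fun u hu => ?_)
      obtain ⟨hu0, hut⟩ := hu
      have htu : 0 < t - u := by linarith
      have hΦu : 0 < Φinv u⁻¹ := hinvpos _ (inv_pos.2 hu0)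
      have hΦtu : 0 < Φinv (t - u)⁻¹ := hinvpos _ (inv_pos.2 htu)
      positivity
    · exact (ae_restrict_iff' measurableSet_Ioo).2 (ae_of_all _ hbound)
  refine hle.trans_eq ?_
  -- compute the dominating integral
  have key : ∫ u in Ioo (0 : ℝ) t, u ^ p * (t - u) ^ q * C
      = (t ^ (p + q + 1) * ∫ x in (0:ℝ)..1, x ^ q * (1 - x) ^ p) * C := by
    rw [integral_mul_const, ← integral_Ioc_eq_integral_Ioo,
      ← intervalIntegral.integral_of_le ht.le, rbeta_scaled p q ht, rbeta_symm]
  rw [key]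
  have hB : (∫ s in Ioo (0 : ℝ) 1,
      s ^ (β / 2 + 1 - θ - 1) * (1 - s) ^ (γ / 2 + 1 - η - 1))
      = ∫ x in (0:ℝ)..1, x ^ q * (1 - x) ^ p := by
    rw [← integral_Ioc_eq_integral_Ioo, ← intervalIntegral.integral_of_le (by norm_num : (0:ℝ) ≤ 1)]
    congr 1
    ext x
    rw [hqdef, hpdef, show β / 2 + 1 - θ - 1 = β / 2 - θ by ring,
      show γ / 2 + 1 - η - 1 = γ / 2 - η by ring]
  rw [hB, hCdef]
  have hT : t ^ (p + q + 1) * (t ^ (-(γ / 2)) * t ^ (-(β / 2))) = t ^ (1 - η - θ) := by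
    rw [← Real.rpow_add ht, ← Real.rpow_add ht]
    congr 1
    rw [hpdef, hqdef]; ring
  calc t ^ (p + q + 1) * (∫ x in (0:ℝ)..1, x ^ q * (1 - x) ^ p)
        * (t ^ (-(γ / 2)) * t ^ (-(β / 2)) * Φinv t⁻¹ ^ (-γ - β))
      = (∫ x in (0:ℝ)..1, x ^ q * (1 - x) ^ p)
        * (t ^ (p + q + 1) * (t ^ (-(γ / 2)) * t ^ (-(β / 2)))) * Φinv t⁻¹ ^ (-γ - β) := by
        ring
    _ = _ := by rw [hT]
end

section
/- Suppose Φ satisfies the weak lower scaling condition a₁λ^{δ₁}Φ(r) ≤ Φ(λr) for λ ≥ 1, r ≥ 1 (a₁ ∈ (0,1), δ₁ ∈ (0,2]). Then for every T ≥ 1, t ∈ (0,T] and β < δ₁: ∫_{Φ⁻¹(T⁻¹)/Φ⁻¹(t⁻¹)}^{1} r^{β−1} Φ(r⁻¹) dr ≤ (Φ⁻¹(T⁻¹)^{β−2} / (a₁(δ₁ − β))) · t⁻¹ Φ⁻¹(t⁻¹)^{-β}. -/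
open Real MeasureTheory Set

/-- If `Φ` satisfies the weak lower scaling condition
`a₁ λ^{δ₁} Φ(r) ≤ Φ(λr)` for `λ ≥ 1, r ≥ 1` (`a₁ ∈ (0,1)`, `δ₁ ∈ (0,2]`), then for
every `T ≥ 1`, `t ∈ (0,T]` and `β < δ₁`:
`∫_{Φ⁻¹(T⁻¹)/Φ⁻¹(t⁻¹)}^1 r^{β−1} Φ(r⁻¹) dr
   ≤ (Φ⁻¹(T⁻¹)^{β−2} / (a₁(δ₁−β))) t⁻¹ Φ⁻¹(t⁻¹)^{-β}`. -/
theorem stmt_11 (Φ Φinv : ℝ → ℝ) (a₁ δ₁ : ℝ)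
    (hδ₁ : 0 < δ₁) (hδ₂ : δ₁ ≤ 2) (ha₁ : 0 < a₁) (ha₂ : a₁ < 1)
    (hΦpos : ∀ t : ℝ, 0 < t → 0 < Φ t)
    (hΦmono : ∀ s t : ℝ, 0 < s → s < t → Φ s < Φ t)
    (hΦ1 : Φ 1 = 1)
    (hinvpos : ∀ r : ℝ, 0 < r → 0 < Φinv r)
    (hleft : ∀ t : ℝ, 0 < t → Φinv (Φ t) = t)
    (hright : ∀ r : ℝ, 0 < r → Φ (Φinv r) = r)
    (hup : ∀ lam r : ℝ, 1 ≤ lam → 0 < r → Φ (lam * r) ≤ lam ^ 2 * Φ r)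
    (hlow : ∀ lam r : ℝ, 1 ≤ lam → 1 ≤ r → a₁ * lam ^ δ₁ * Φ r ≤ Φ (lam * r)) :
    ∀ T : ℝ, 1 ≤ T → ∀ t : ℝ, 0 < t → t ≤ T → ∀ β : ℝ, β < δ₁ →
      (∫ r in Ioc (Φinv T⁻¹ / Φinv t⁻¹) 1, r ^ (β - 1) * Φ r⁻¹) ≤
        Φinv T⁻¹ ^ (β - 2) / (a₁ * (δ₁ - β)) * (t⁻¹ * Φinv t⁻¹ ^ (-β)) := by
  intro T hT t ht htT β hβ
  have hTpos : (0:ℝ) < T := lt_of_lt_of_le one_pos hT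
  have hTinv : (0:ℝ) < T⁻¹ := by positivity
  have htinv : (0:ℝ) < t⁻¹ := by positivity
  set A := Φinv T⁻¹ with hAdef
  set B := Φinv t⁻¹ with hBdef
  have hA : 0 < A := hinvpos _ hTinv
  have hB : 0 < B := hinvpos _ htinv
  have hΦA : Φ A = T⁻¹ := hright _ hTinv
  have hΦB : Φ B = t⁻¹ := hright _ htinv
  have hTi1 : T⁻¹ ≤ 1 := by
    have h := inv_anti₀ one_pos hT
    simpa using h
  have hti : T⁻¹ ≤ t⁻¹ := inv_anti₀ ht htT
  have hA1 : A ≤ 1 := by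
    by_contra h
    push_neg at h
    have h1 := hΦmono 1 A one_pos h
    rw [hΦ1, hΦA] at h1
    linarith
  have hAB : A ≤ B := by
    by_contra h
    push_neg at h
    have h1 := hΦmono B A hB h
    rw [hΦA, hΦB] at h1
    linarith
  have hβ2 : β < 2 := lt_of_lt_of_le hβ hδ₂
  have hK : 0 < a₁ * (δ₁ - β) := mul_pos ha₁ (by linarith)
  have hK2 : a₁ * (δ₁ - β) ≤ 2 - β := by nlinarith
  have hABpos : 0 < A / B := div_pos hA hB
  have hAB1 : A / B ≤ 1 := div_le_one_of_le₀ hAB hB.le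
  have hBxy : ∀ x y z : ℝ, x + y = z → B ^ x * B ^ y = B ^ z := by
    intro x y z h
    rw [← Real.rpow_add hB, h]
  -- pointwise upper bound via the upper scaling (for B * r ≤ 1)
  have key2 : ∀ r : ℝ, 0 < r → B * r ≤ 1 →
      r ^ (β - 1) * Φ r⁻¹ ≤ t⁻¹ * B ^ (-(2:ℝ)) * r ^ (β - 3) := by
    intro r hr hBr
    have hBr0 : 0 < B * r := mul_pos hB hr
    have hlam : 1 ≤ (B * r)⁻¹ := by simpa using inv_anti₀ hBr0 hBr
    have h1 := hup ((B * r)⁻¹) B hlam hB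
    have harg : (B * r)⁻¹ * B = r⁻¹ := by field_simp
    rw [harg, hΦB] at h1
    have h2 : ((B * r)⁻¹) ^ 2 * t⁻¹ = t⁻¹ * B ^ (-(2:ℝ)) * r ^ (-(2:ℝ)) := by
      rw [Real.rpow_neg hB.le, Real.rpow_neg hr.le, Real.rpow_two, Real.rpow_two]
      ring
    have h3 : r ^ (β - 1) * Φ r⁻¹ ≤ r ^ (β - 1) * (t⁻¹ * B ^ (-(2:ℝ)) * r ^ (-(2:ℝ))) := by
      apply mul_le_mul_of_nonneg_left _ (Real.rpow_nonneg hr.le _)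
      rw [← h2]; exact h1
    have hrxy : r ^ (β - 1) * r ^ (-(2:ℝ)) = r ^ (β - 3) := by
      rw [← Real.rpow_add hr]
      congr 1
      ring
    calc r ^ (β - 1) * Φ r⁻¹ ≤ r ^ (β - 1) * (t⁻¹ * B ^ (-(2:ℝ)) * r ^ (-(2:ℝ))) := h3
      _ = t⁻¹ * B ^ (-(2:ℝ)) * (r ^ (β - 1) * r ^ (-(2:ℝ))) := by ring
      _ = t⁻¹ * B ^ (-(2:ℝ)) * r ^ (β - 3) := by rw [hrxy]
  -- pointwise upper bound via the lower scaling (for 1 ≤ B * r, r ≤ 1)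
  have key1 : ∀ r : ℝ, 0 < r → 1 ≤ B * r → r ≤ 1 →
      r ^ (β - 1) * Φ r⁻¹ ≤ t⁻¹ * a₁⁻¹ * B ^ (-δ₁) * r ^ (β - δ₁ - 1) := by
    intro r hr hBr hr1
    have hrinv : 1 ≤ r⁻¹ := by simpa using inv_anti₀ hr hr1
    have h1 := hlow (B * r) r⁻¹ hBr hrinv
    have harg : B * r * r⁻¹ = B := by field_simp
    rw [harg, hΦB] at h1
    have hBrpow : (B * r) ^ δ₁ = B ^ δ₁ * r ^ δ₁ := Real.mul_rpow hB.le hr.le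
    have hBp : (0:ℝ) < B ^ δ₁ := Real.rpow_pos_of_pos hB _
    have hrp : (0:ℝ) < r ^ δ₁ := Real.rpow_pos_of_pos hr _
    have h3 : a₁ * (B ^ δ₁ * r ^ δ₁) * Φ r⁻¹ ≤ t⁻¹ := by rw [← hBrpow]; exact h1
    have h2 : Φ r⁻¹ ≤ t⁻¹ * a₁⁻¹ * B ^ (-δ₁) * r ^ (-δ₁) := by
      rw [Real.rpow_neg hB.le, Real.rpow_neg hr.le]
      rw [show t⁻¹ * a₁⁻¹ * (B ^ δ₁)⁻¹ * (r ^ δ₁)⁻¹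
          = t⁻¹ / (a₁ * (B ^ δ₁ * r ^ δ₁)) from by field_simp]
      rw [le_div_iff₀ (by positivity)]
      calc Φ r⁻¹ * (a₁ * (B ^ δ₁ * r ^ δ₁)) = a₁ * (B ^ δ₁ * r ^ δ₁) * Φ r⁻¹ := by ring
        _ ≤ t⁻¹ := h3
    have hrxy : r ^ (β - 1) * r ^ (-δ₁) = r ^ (β - δ₁ - 1) := by
      rw [← Real.rpow_add hr]
      congr 1
      ring
    calc r ^ (β - 1) * Φ r⁻¹
        ≤ r ^ (β - 1) * (t⁻¹ * a₁⁻¹ * B ^ (-δ₁) * r ^ (-δ₁)) :=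
          mul_le_mul_of_nonneg_left h2 (Real.rpow_nonneg hr.le _)
      _ = t⁻¹ * a₁⁻¹ * B ^ (-δ₁) * (r ^ (β - 1) * r ^ (-δ₁)) := by ring
      _ = t⁻¹ * a₁⁻¹ * B ^ (-δ₁) * r ^ (β - δ₁ - 1) := by rw [hrxy]
  -- integrability of the integrand on positive intervals
  have hf_int : ∀ a b : ℝ, 0 < a → a ≤ b →
      IntervalIntegrable (fun r => r ^ (β - 1) * Φ r⁻¹) volume a b := by
    intro a b ha hab
    have huIcc : uIcc a b = Icc a b := uIcc_of_le hab
    have hanti : AntitoneOn (fun r => Φ r⁻¹) (uIcc a b) := by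
      rw [huIcc]
      intro x hx y hy hxy
      rcases eq_or_lt_of_le hxy with h | h
      · rw [h]
      · have hx0 : 0 < x := lt_of_lt_of_le ha hx.1
        have hy0 : 0 < y := lt_trans hx0 h
        exact le_of_lt (hΦmono _ _ (by positivity) (by
          exact inv_strictAnti₀ hx0 h))
    have hcont : ContinuousOn (fun r : ℝ => r ^ (β - 1)) (uIcc a b) := by
      intro x hx
      rw [huIcc] at hx
      exact (Real.continuousAt_rpow_const x _
        (Or.inl (ne_of_gt (lt_of_lt_of_le ha hx.1)))).continuousWithinAt
    exact (hanti.intervalIntegrable).continuousOn_mul hcont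
  -- integrability of the rpow majorants
  have hg_int : ∀ (c e : ℝ) (a b : ℝ), 0 < a → a ≤ b →
      IntervalIntegrable (fun r : ℝ => c * r ^ e) volume a b := by
    intro c e a b ha hab
    apply ContinuousOn.intervalIntegrable
    intro x hx
    rw [uIcc_of_le hab] at hx
    exact (continuousAt_const.mul (Real.continuousAt_rpow_const x _
      (Or.inl (ne_of_gt (lt_of_lt_of_le ha hx.1))))).continuousWithinAt
  -- value of the rpow integrals
  have hval : ∀ (c e : ℝ) (a b : ℝ), 0 < a → a ≤ b → e ≠ -1 →
      (∫ r in a..b, c * r ^ e) = c * ((b ^ (e + 1) - a ^ (e + 1)) / (e + 1)) := by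
    intro c e a b ha hab he
    rw [intervalIntegral.integral_const_mul, integral_rpow]
    right
    constructor
    · exact he
    · rw [uIcc_of_le hab]
      intro h0
      exact absurd h0.1 (not_le.2 ha)
  have hIoc : (∫ r in Ioc (A / B) 1, r ^ (β - 1) * Φ r⁻¹)
      = ∫ r in (A / B)..1, r ^ (β - 1) * Φ r⁻¹ := by
    rw [intervalIntegral.integral_of_le hAB1]
  rw [hIoc]
  -- abbreviations
  have hPpos : (0:ℝ) < A ^ (β - 2) := Real.rpow_pos_of_pos hA _
  have hP1 : (1:ℝ) ≤ A ^ (β - 2) :=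
    Real.one_le_rpow_of_pos_of_le_one_of_nonpos hA hA1 (by linarith)
  have hQpos : (0:ℝ) < B ^ (-β) := Real.rpow_pos_of_pos hB _
  have hRpos : (0:ℝ) < B ^ (-δ₁) := Real.rpow_pos_of_pos hB _
  have hdiv : (A / B) ^ (β - 2) = A ^ (β - 2) * B ^ (-(β - 2)) := by
    rw [Real.div_rpow hA.le hB.le, Real.rpow_neg hB.le, div_eq_mul_inv]
  have hBm2 : B ^ (-(2:ℝ)) * (A / B) ^ (β - 2) = A ^ (β - 2) * B ^ (-β) := by
    rw [hdiv, show B ^ (-(2:ℝ)) * (A ^ (β - 2) * B ^ (-(β - 2)))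
        = A ^ (β - 2) * (B ^ (-(2:ℝ)) * B ^ (-(β - 2))) from by ring,
      hBxy (-(2:ℝ)) (-(β - 2)) (-β) (by ring)]
  have einv : ∀ e : ℝ, (B⁻¹ : ℝ) ^ e = B ^ (-e) := fun e =>
    (Real.inv_rpow hB.le e).trans (Real.rpow_neg hB.le e).symm
  rcases le_or_gt B 1 with hBle | hBgt
  -- Case B ≤ 1 : use the quadratic bound on the whole interval
  · have hmono : (∫ r in (A / B)..1, r ^ (β - 1) * Φ r⁻¹)
        ≤ ∫ r in (A / B)..1, t⁻¹ * B ^ (-(2:ℝ)) * r ^ (β - 3) := by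
      apply intervalIntegral.integral_mono_on hAB1 (hf_int _ _ hABpos hAB1)
        (hg_int _ _ _ _ hABpos hAB1)
      intro x hx
      have hx0 : 0 < x := lt_of_lt_of_le hABpos hx.1
      exact key2 x hx0 (by nlinarith [hx.2, hB.le])
    have hcomp := hval (t⁻¹ * B ^ (-(2:ℝ))) (β - 3) (A / B) 1 hABpos hAB1
      (by intro h; rw [sub_eq_iff_eq_add] at h; norm_num at h; linarith)
    rw [hcomp] at hmono
    have e1 : β - 3 + 1 = β - 2 := by ring
    rw [e1, Real.one_rpow] at hmono
    have eq2 : ((1:ℝ) - (A / B) ^ (β - 2)) / (β - 2) = ((A / B) ^ (β - 2) - 1) / (2 - β) := by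
      rw [div_eq_div_iff (by intro h; exact absurd h (sub_ne_zero.2 (ne_of_lt hβ2)) : β - 2 ≠ 0)
        (ne_of_gt (by linarith : (0:ℝ) < 2 - β))]
      ring
    rw [eq2] at hmono
    have step : t⁻¹ * B ^ (-(2:ℝ)) * (((A / B) ^ (β - 2) - 1) / (2 - β))
        ≤ A ^ (β - 2) / (a₁ * (δ₁ - β)) * (t⁻¹ * B ^ (-β)) := by
      have s1 : t⁻¹ * B ^ (-(2:ℝ)) * (((A / B) ^ (β - 2) - 1) / (2 - β))
          ≤ t⁻¹ * B ^ (-(2:ℝ)) * ((A / B) ^ (β - 2) / (2 - β)) :=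
        mul_le_mul_of_nonneg_left
          ((div_le_div_iff_of_pos_right (by linarith)).2 (by linarith)) (by positivity)
      have s2 : t⁻¹ * B ^ (-(2:ℝ)) * ((A / B) ^ (β - 2) / (2 - β))
          = t⁻¹ * (A ^ (β - 2) * B ^ (-β)) / (2 - β) := by
        rw [show t⁻¹ * B ^ (-(2:ℝ)) * ((A / B) ^ (β - 2) / (2 - β))
            = t⁻¹ * (B ^ (-(2:ℝ)) * (A / B) ^ (β - 2)) / (2 - β) from by ring, hBm2]
      have s3 : t⁻¹ * (A ^ (β - 2) * B ^ (-β)) / (2 - β)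
          ≤ t⁻¹ * (A ^ (β - 2) * B ^ (-β)) / (a₁ * (δ₁ - β)) := by
        rw [div_eq_mul_inv, div_eq_mul_inv]
        exact mul_le_mul_of_nonneg_left (inv_anti₀ hK hK2) (by positivity)
      have s4 : t⁻¹ * (A ^ (β - 2) * B ^ (-β)) / (a₁ * (δ₁ - β))
          = A ^ (β - 2) / (a₁ * (δ₁ - β)) * (t⁻¹ * B ^ (-β)) := by ring
      rw [s2] at s1
      rw [s4] at s3
      linarith
    linarith
  -- Case B > 1 : split at B⁻¹
  · have hBinv1 : B⁻¹ ≤ 1 := by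
      have := inv_anti₀ one_pos hBgt.le
      simpa using this
    have hBinvpos : (0:ℝ) < B⁻¹ := by positivity
    have hABBinv : A / B ≤ B⁻¹ := by
      rw [div_le_iff₀ hB]
      calc A ≤ 1 := hA1
        _ = B⁻¹ * B := by field_simp
    have hsplit : (∫ r in (A / B)..1, r ^ (β - 1) * Φ r⁻¹)
        = (∫ r in (A / B)..B⁻¹, r ^ (β - 1) * Φ r⁻¹)
          + ∫ r in B⁻¹..1, r ^ (β - 1) * Φ r⁻¹ :=
      (intervalIntegral.integral_add_adjacent_intervals
        (hf_int _ _ hABpos hABBinv) (hf_int _ _ hBinvpos hBinv1)).symm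
    rw [hsplit]
    -- first piece
    have h1 : (∫ r in (A / B)..B⁻¹, r ^ (β - 1) * Φ r⁻¹)
        ≤ t⁻¹ * ((A ^ (β - 2) - 1) * B ^ (-β)) / (2 - β) := by
      have hmono : (∫ r in (A / B)..B⁻¹, r ^ (β - 1) * Φ r⁻¹)
          ≤ ∫ r in (A / B)..B⁻¹, t⁻¹ * B ^ (-(2:ℝ)) * r ^ (β - 3) := by
        apply intervalIntegral.integral_mono_on hABBinv (hf_int _ _ hABpos hABBinv)
          (hg_int _ _ _ _ hABpos hABBinv)
        intro x hx
        have hx0 : 0 < x := lt_of_lt_of_le hABpos hx.1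
        apply key2 x hx0
        calc B * x ≤ B * B⁻¹ := by
              exact mul_le_mul_of_nonneg_left hx.2 hB.le
          _ = 1 := by field_simp
      have hcomp := hval (t⁻¹ * B ^ (-(2:ℝ))) (β - 3) (A / B) B⁻¹ hABpos hABBinv
        (by intro h; rw [sub_eq_iff_eq_add] at h; norm_num at h; linarith)
      rw [hcomp] at hmono
      have e1 : β - 3 + 1 = β - 2 := by ring
      rw [e1] at hmono
      have eq2 : ((B⁻¹) ^ (β - 2) - (A / B) ^ (β - 2)) / (β - 2)
          = ((A / B) ^ (β - 2) - (B⁻¹) ^ (β - 2)) / (2 - β) := by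
        rw [div_eq_div_iff (sub_ne_zero.2 (ne_of_lt hβ2)) (ne_of_gt (by linarith : (0:ℝ) < 2 - β))]
        ring
      rw [eq2, einv] at hmono
      have expand : B ^ (-(2:ℝ)) * ((A / B) ^ (β - 2) - B ^ (-(β - 2)))
          = (A ^ (β - 2) - 1) * B ^ (-β) := by
        rw [mul_sub, hBm2, hBxy (-(2:ℝ)) (-(β - 2)) (-β) (by ring)]
        ring
      calc (∫ r in (A / B)..B⁻¹, r ^ (β - 1) * Φ r⁻¹)
          ≤ t⁻¹ * B ^ (-(2:ℝ)) * (((A / B) ^ (β - 2) - B ^ (-(β - 2))) / (2 - β)) := hmono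
        _ = t⁻¹ * (B ^ (-(2:ℝ)) * ((A / B) ^ (β - 2) - B ^ (-(β - 2)))) / (2 - β) := by ring
        _ = t⁻¹ * ((A ^ (β - 2) - 1) * B ^ (-β)) / (2 - β) := by rw [expand]
    -- second piece
    have h2 : (∫ r in B⁻¹..1, r ^ (β - 1) * Φ r⁻¹)
        ≤ t⁻¹ * a₁⁻¹ * ((B ^ (-β) - B ^ (-δ₁)) / (δ₁ - β)) := by
      have hmono : (∫ r in B⁻¹..1, r ^ (β - 1) * Φ r⁻¹)
          ≤ ∫ r in B⁻¹..1, t⁻¹ * a₁⁻¹ * B ^ (-δ₁) * r ^ (β - δ₁ - 1) := by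
        apply intervalIntegral.integral_mono_on hBinv1 (hf_int _ _ hBinvpos hBinv1)
          (hg_int _ _ _ _ hBinvpos hBinv1)
        intro x hx
        have hx0 : 0 < x := lt_of_lt_of_le hBinvpos hx.1
        apply key1 x hx0 _ hx.2
        calc (1:ℝ) = B * B⁻¹ := by field_simp
          _ ≤ B * x := mul_le_mul_of_nonneg_left hx.1 hB.le
      have hcomp := hval (t⁻¹ * a₁⁻¹ * B ^ (-δ₁)) (β - δ₁ - 1) B⁻¹ 1 hBinvpos hBinv1
        (by intro h; rw [sub_eq_iff_eq_add] at h; norm_num at h; linarith)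
      rw [hcomp] at hmono
      have e1 : β - δ₁ - 1 + 1 = β - δ₁ := by ring
      rw [e1, Real.one_rpow, einv] at hmono
      have flip : ((1:ℝ) - B ^ (-(β - δ₁))) / (β - δ₁)
          = (B ^ (-(β - δ₁)) - 1) / (δ₁ - β) := by
        rw [div_eq_div_iff (sub_ne_zero.2 (ne_of_lt hβ)) (ne_of_gt (by linarith : (0:ℝ) < δ₁ - β))]
        ring
      rw [flip] at hmono
      have expand2 : B ^ (-δ₁) * (B ^ (-(β - δ₁)) - 1) = B ^ (-β) - B ^ (-δ₁) := by
        rw [mul_sub, hBxy (-δ₁) (-(β - δ₁)) (-β) (by ring)]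
        ring
      calc (∫ r in B⁻¹..1, r ^ (β - 1) * Φ r⁻¹)
          ≤ t⁻¹ * a₁⁻¹ * B ^ (-δ₁) * ((B ^ (-(β - δ₁)) - 1) / (δ₁ - β)) := hmono
        _ = t⁻¹ * a₁⁻¹ * (B ^ (-δ₁) * (B ^ (-(β - δ₁)) - 1)) / (δ₁ - β) := by ring
        _ = t⁻¹ * a₁⁻¹ * ((B ^ (-β) - B ^ (-δ₁)) / (δ₁ - β)) := by rw [expand2]; ring
    -- arithmetic to combine
    have d1 : t⁻¹ * ((A ^ (β - 2) - 1) * B ^ (-β)) / (2 - β)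
        ≤ t⁻¹ * ((A ^ (β - 2) - 1) * B ^ (-β)) / (a₁ * (δ₁ - β)) := by
      rw [div_eq_mul_inv, div_eq_mul_inv]
      apply mul_le_mul_of_nonneg_left (inv_anti₀ hK hK2)
      have h01 : (0:ℝ) ≤ A ^ (β - 2) - 1 := by linarith
      positivity
    have d2 : t⁻¹ * a₁⁻¹ * ((B ^ (-β) - B ^ (-δ₁)) / (δ₁ - β))
        ≤ t⁻¹ * a₁⁻¹ * (B ^ (-β) / (δ₁ - β)) := by
      apply mul_le_mul_of_nonneg_left _ (by positivity)
      exact (div_le_div_iff_of_pos_right (by linarith)).2 (by linarith)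
    have d3 : t⁻¹ * ((A ^ (β - 2) - 1) * B ^ (-β)) / (a₁ * (δ₁ - β))
          + t⁻¹ * a₁⁻¹ * (B ^ (-β) / (δ₁ - β))
        = A ^ (β - 2) / (a₁ * (δ₁ - β)) * (t⁻¹ * B ^ (-β)) := by
      rw [div_eq_mul_inv, div_eq_mul_inv, div_eq_mul_inv, mul_inv]
      ring
    linarith
end

section
/- Assume Φ satisfies weak lower scaling (constants a₁, δ₁) and the integrability condition ∫₀¹ Φ(r)/r dr = C_* < ∞. For every T ≥ 1 there exists c₁ > 0 (depending on d, δ₁, a₁, C_*, T, Φ⁻¹(T⁻¹)) such that for all 0 < t ≤ T, β ∈ [0, δ₁) and γ ∈ ℝ: ∫_{ℝ^d} ρ_γ^β(t,x) dx ≤ (c₁/(δ₁ − β)) · t⁻¹ Φ⁻¹(t⁻¹)^{-γ−β}. -/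
open Real MeasureTheory Set

/-- `ρ_γ^β(t,x) = Φ⁻¹(t⁻¹)^{-γ} (|x|^β ∧ 1) ρ(t,x)` where
`ρ(t,x) = Φ((1/Φ⁻¹(t⁻¹)+|x|)⁻¹)(1/Φ⁻¹(t⁻¹)+|x|)^{-d}`. -/
noncomputable def rhogb (d : ℕ) (Φ Φinv : ℝ → ℝ) (γ β t : ℝ)
    (x : EuclideanSpace ℝ (Fin d)) : ℝ :=
  Φinv t⁻¹ ^ (-γ) * min (‖x‖ ^ β) 1 *
    (Φ (((Φinv t⁻¹)⁻¹ + ‖x‖)⁻¹) / ((Φinv t⁻¹)⁻¹ + ‖x‖) ^ d)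

/-- One-dimensional change of variables for lower Lebesgue integrals. -/
lemma my_lintegral_image {s : Set ℝ} {f f' : ℝ → ℝ}
    (hs : MeasurableSet s) (hf' : ∀ x ∈ s, HasDerivWithinAt f (f' x) s x)
    (hf : Set.InjOn f s) (g : ℝ → ENNReal) :
    ∫⁻ x in f '' s, g x = ∫⁻ x in s, ENNReal.ofReal |f' x| * g (f x) := by
  simpa only [ContinuousLinearMap.det_toSpanSingleton] using
    MeasureTheory.lintegral_image_eq_lintegral_abs_det_fderiv_mul volume hs
      (fun x hx => (hf' x hx).hasFDerivWithinAt) hf g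

/-- Polar-coordinates formula on `EuclideanSpace ℝ (Fin d)`. -/
lemma my_polar (d : ℕ) (hd : 1 ≤ d) (F : ℝ → ℝ) :
    (∫ x : EuclideanSpace ℝ (Fin d), F ‖x‖) =
      (d : ℝ) * ((volume (Metric.ball (0 : EuclideanSpace ℝ (Fin d)) 1)).toReal *
        ∫ y in Ioi (0:ℝ), y ^ (d - 1) * F y) := by
  haveI : Nontrivial (EuclideanSpace ℝ (Fin d)) := by
    apply Module.nontrivial_of_finrank_pos (R := ℝ)
    rw [finrank_euclideanSpace_fin]; omega
  have h := MeasureTheory.integral_fun_norm_addHaar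
    (volume : Measure (EuclideanSpace ℝ (Fin d))) F
  rw [finrank_euclideanSpace_fin] at h
  simpa [nsmul_eq_mul, smul_eq_mul, mul_assoc, measureReal_def] using h

/-- Core one-dimensional estimate. -/
lemma my_core (d : ℕ) (hd : 1 ≤ d) (Φ : ℝ → ℝ) (a₁ δ₁ : ℝ) (ha₁ : 0 < a₁)
    (hΦpos : ∀ t : ℝ, 0 < t → 0 < Φ t)
    (hΦmono : ∀ s t : ℝ, 0 < s → s < t → Φ s < Φ t)
    (hlow : ∀ lam r : ℝ, 1 ≤ lam → 1 ≤ r → a₁ * lam ^ δ₁ * Φ r ≤ Φ (lam * r))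
    (hC : IntegrableOn (fun r : ℝ => Φ r / r) (Ioo (0 : ℝ) 1))
    (A : ℝ) (hA : 0 < A) (β : ℝ) (hβ : 0 ≤ β) (hβδ : β < δ₁) :
    (∫ y in Ioi (0:ℝ), y ^ (d-1) * (min (y ^ β) 1 * (Φ ((A⁻¹ + y)⁻¹) / (A⁻¹ + y) ^ d)))
      ≤ a₁⁻¹ * (Φ A * A ^ (-β)) / (δ₁ - β) + ∫ x in Ioo (0:ℝ) 1, Φ x / x := by
  have hδβ : 0 < δ₁ - β := sub_pos.2 hβδ
  have hs : 0 < A⁻¹ := inv_pos.2 hA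
  set s : ℝ := A⁻¹ with hsdef
  have hC0 : 0 ≤ ∫ x in Ioo (0:ℝ) 1, Φ x / x :=
    setIntegral_nonneg measurableSet_Ioo (fun x hx => div_nonneg (hΦpos x hx.1).le hx.1.le)
  have hM0 : 0 ≤ a₁⁻¹ * (Φ A * A ^ (-β)) / (δ₁ - β) := by
    have h1 := (hΦpos A hA).le
    have h2 := (Real.rpow_pos_of_pos hA (-β)).le
    positivity
  -- extended Φ
  set Φ' : ℝ → ℝ := fun r => if r ≤ 0 then 0 else Φ r with hΦ'def
  have hΦ'eq : ∀ r : ℝ, 0 < r → Φ' r = Φ r := fun r hr => if_neg (not_le.2 hr)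
  have hΦ'nn : ∀ r : ℝ, 0 ≤ Φ' r := by
    intro r
    by_cases h : r ≤ 0
    · simp [hΦ'def, h]
    · rw [hΦ'eq r (not_le.1 h)]; exact (hΦpos r (not_le.1 h)).le
  have hΦ'mono : Monotone Φ' := by
    intro a b hab
    by_cases hb : b ≤ 0
    · have ha : a ≤ 0 := hab.trans hb
      simp [hΦ'def, ha, hb]
    · have hb' : 0 < b := not_le.1 hb
      rw [hΦ'eq b hb']
      by_cases ha : a ≤ 0
      · calc Φ' a = 0 := by simp [hΦ'def, ha]
          _ ≤ Φ b := (hΦpos b hb').le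
      · have ha' : 0 < a := not_le.1 ha
        rw [hΦ'eq a ha']
        rcases eq_or_lt_of_le hab with h | h
        · exact h ▸ le_rfl
        · exact (hΦmono a b ha' h).le
  have hΦ'meas : Measurable Φ' := hΦ'mono.measurable
  -- replace Φ by Φ' inside the integral
  have hcong : (∫ y in Ioi (0:ℝ), y ^ (d-1) * (min (y ^ β) 1 * (Φ ((s + y)⁻¹) / (s + y) ^ d)))
      = ∫ y in Ioi (0:ℝ), y ^ (d-1) * (min (y ^ β) 1 * (Φ' ((s + y)⁻¹) / (s + y) ^ d)) := by
    apply setIntegral_congr_fun measurableSet_Ioi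
    intro y hy
    have hsy : 0 < s + y := add_pos hs hy
    dsimp only
    rw [hΦ'eq _ (inv_pos.2 hsy)]
  rw [hcong]
  -- measurability and nonnegativity
  have hmeasH : Measurable (fun y : ℝ =>
      y ^ (d-1) * (min (y ^ β) 1 * (Φ' ((s + y)⁻¹) / (s + y) ^ d))) := by
    apply (measurable_id.pow_const (d-1)).mul
    apply Measurable.mul
    · exact (measurable_id.pow measurable_const).min measurable_const
    · exact (hΦ'meas.comp (measurable_const.add measurable_id).inv).div
        ((measurable_const.add measurable_id).pow_const d)
  have hHnn : ∀ y : ℝ, y ∈ Ioi (0:ℝ) →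
      0 ≤ y ^ (d-1) * (min (y ^ β) 1 * (Φ' ((s + y)⁻¹) / (s + y) ^ d)) := by
    intro y hy
    have hy0 : (0:ℝ) < y := hy
    have hsy : 0 < s + y := add_pos hs hy0
    exact mul_nonneg (pow_nonneg hy0.le _)
      (mul_nonneg (le_min (Real.rpow_nonneg hy0.le β) one_pos.le)
        (div_nonneg (hΦ'nn _) (pow_nonneg hsy.le _)))
  rw [MeasureTheory.integral_eq_lintegral_of_nonneg_ae
    ((ae_restrict_iff' measurableSet_Ioi).2 (Filter.Eventually.of_forall hHnn))
    hmeasH.aestronglyMeasurable]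
  apply ENNReal.toReal_le_of_le_ofReal (add_nonneg hM0 hC0)
  -- profile function
  set G : ℝ → ℝ := fun u => min (u ^ β) 1 * (Φ' u⁻¹ / u) with hGdef
  -- Step A: pointwise comparison
  have stepA : (∫⁻ y in Ioi (0:ℝ), ENNReal.ofReal
        (y ^ (d-1) * (min (y ^ β) 1 * (Φ' ((s + y)⁻¹) / (s + y) ^ d))))
      ≤ ∫⁻ y in Ioi (0:ℝ), ENNReal.ofReal (G (s + y)) := by
    apply setLIntegral_mono' measurableSet_Ioi
    intro y hy
    have hy0 : (0:ℝ) < y := hy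
    have hsy : 0 < s + y := add_pos hs hy0
    apply ENNReal.ofReal_le_ofReal
    have hyd : y ^ (d-1) ≤ (s+y) ^ (d-1) :=
      pow_le_pow_left₀ hy0.le (le_add_of_nonneg_left hs.le) _
    have hmin : min (y ^ β) 1 ≤ min ((s+y) ^ β) 1 :=
      min_le_min (Real.rpow_le_rpow hy0.le (le_add_of_nonneg_left hs.le) hβ) le_rfl
    have hminnn : 0 ≤ min ((s+y) ^ β) 1 := le_min (Real.rpow_nonneg hsy.le β) one_pos.le
    have hQ : 0 ≤ Φ' ((s+y)⁻¹) / (s+y) ^ d := div_nonneg (hΦ'nn _) (pow_nonneg hsy.le _)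
    have h1 : y ^ (d-1) * (min (y ^ β) 1 * (Φ' ((s + y)⁻¹) / (s + y) ^ d))
        ≤ (s+y) ^ (d-1) * (min ((s+y) ^ β) 1 * (Φ' ((s + y)⁻¹) / (s + y) ^ d)) :=
      mul_le_mul hyd (mul_le_mul hmin le_rfl hQ hminnn)
        (mul_nonneg (le_min (Real.rpow_nonneg hy0.le β) one_pos.le) hQ)
        (pow_nonneg hsy.le _)
    refine h1.trans (le_of_eq ?_)
    simp only [hGdef]
    have hd' : (s+y) ^ d = (s+y) ^ (d-1) * (s+y) := by
      rw [← pow_succ]; congr 1; omega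
    rw [hd']
    field_simp
  -- Step B: translation
  have stepB : (∫⁻ u in Ioi s, ENNReal.ofReal (G u))
      = ∫⁻ y in Ioi (0:ℝ), ENNReal.ofReal (G (s + y)) := by
    have himg : (fun y : ℝ => s + y) '' Ioi (0:ℝ) = Ioi s := by
      rw [image_const_add_Ioi, add_zero]
    have h := my_lintegral_image (s := Ioi (0:ℝ)) (f := fun y => s + y) (f' := fun _ => 1)
      measurableSet_Ioi (fun x _ => ((hasDerivAt_id x).const_add s).hasDerivWithinAt)
      (fun a _ b _ h => by simpa using h) (fun u => ENNReal.ofReal (G u))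
    rw [himg] at h
    simpa using h
  -- Step C: splitting
  have stepC : (∫⁻ u in Ioi s, ENNReal.ofReal (G u))
      ≤ (∫⁻ u in Ioo s 1, ENNReal.ofReal (G u)) + ∫⁻ u in Ici (1:ℝ), ENNReal.ofReal (G u) := by
    refine le_trans (lintegral_mono_set ?_) (lintegral_union_le _ _ _)
    intro u hu
    rcases lt_or_ge u 1 with h | h
    · exact Or.inl ⟨hu, h⟩
    · exact Or.inr h
  -- middle piece
  have hmid : (∫⁻ u in Ioo s 1, ENNReal.ofReal (G u))
      ≤ ENNReal.ofReal (a₁⁻¹ * (Φ A * A ^ (-β)) / (δ₁ - β)) := by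
    rcases le_or_gt 1 s with h1s | hs1
    · rw [Ioo_eq_empty (by exact fun h => absurd h (not_lt.2 h1s))]
      simp
    · set c : ℝ := a₁⁻¹ * Φ A * A ^ (-δ₁) with hcdef
      have hc0 : 0 ≤ c := by
        have h1 := (hΦpos A hA).le
        have h2 := (Real.rpow_pos_of_pos hA (-δ₁)).le
        positivity
      have hpt : ∀ u ∈ Ioo s 1, ENNReal.ofReal (G u)
          ≤ ENNReal.ofReal (c * u ^ (β - δ₁ - 1)) := by
        intro u hu
        have hu0 : 0 < u := hs.trans hu.1
        apply ENNReal.ofReal_le_ofReal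
        have huinv : 1 ≤ u⁻¹ := (one_le_inv₀ hu0).2 hu.2.le
        have hAu : 1 ≤ A * u := by
          have h2 : A * s < A * u := mul_lt_mul_of_pos_left hu.1 hA
          rw [hsdef, mul_inv_cancel₀ hA.ne'] at h2
          exact h2.le
        have hAupos : 0 < (A * u) ^ δ₁ := Real.rpow_pos_of_pos (by positivity) _
        have hlow' := hlow (A * u) u⁻¹ hAu huinv
        have hAuu : A * u * u⁻¹ = A := by field_simp
        rw [hAuu] at hlow'
        have hΦu : Φ u⁻¹ ≤ Φ A / (a₁ * (A*u) ^ δ₁) := by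
          rw [le_div_iff₀ (by positivity)]
          linear_combination hlow'
        have hG : G u = min (u ^ β) 1 * (Φ u⁻¹ / u) := by
          simp only [hGdef]
          rw [hΦ'eq _ (inv_pos.2 hu0)]
        rw [hG]
        have hfin : min (u ^ β) 1 * (Φ u⁻¹ / u) ≤ u ^ β * ((Φ A / (a₁ * (A*u) ^ δ₁)) / u) :=
          mul_le_mul (min_le_left _ _) (by gcongr)
            (div_nonneg (hΦpos _ (inv_pos.2 hu0)).le hu0.le)
            (Real.rpow_nonneg hu0.le β)
        refine hfin.trans (le_of_eq ?_)
        rw [hcdef, Real.mul_rpow hA.le hu0.le, Real.rpow_neg hA.le,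
          show β - δ₁ - 1 = β + (-δ₁ + -1) from by ring,
          Real.rpow_add hu0, Real.rpow_add hu0, Real.rpow_neg_one,
          Real.rpow_neg hu0.le]
        field_simp
      have hint : IntegrableOn (fun u : ℝ => c * u ^ (β - δ₁ - 1)) (Ioo s 1) := by
        have hii : IntervalIntegrable (fun u : ℝ => u ^ (β - δ₁ - 1)) volume s 1 := by
          apply intervalIntegral.intervalIntegrable_rpow
          right
          rw [uIcc_of_le hs1.le]
          rintro ⟨h0, -⟩
          exact absurd h0 (not_le.2 hs)
        have h3 := hii.const_mul c
        rw [intervalIntegrable_iff_integrableOn_Ioc_of_le hs1.le] at h3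
        exact h3.mono_set Ioo_subset_Ioc_self
      have hnn : 0 ≤ᵐ[volume.restrict (Ioo s 1)] fun u : ℝ => c * u ^ (β - δ₁ - 1) := by
        refine (ae_restrict_iff' measurableSet_Ioo).2 (Filter.Eventually.of_forall ?_)
        intro u hu
        exact mul_nonneg hc0 (Real.rpow_nonneg (hs.trans hu.1).le _)
      calc (∫⁻ u in Ioo s 1, ENNReal.ofReal (G u))
          ≤ ∫⁻ u in Ioo s 1, ENNReal.ofReal (c * u ^ (β - δ₁ - 1)) :=
            setLIntegral_mono' measurableSet_Ioo hpt
        _ = ENNReal.ofReal (∫ u in Ioo s 1, c * u ^ (β - δ₁ - 1)) :=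
            (MeasureTheory.ofReal_integral_eq_lintegral_ofReal hint hnn).symm
        _ ≤ ENNReal.ofReal (a₁⁻¹ * (Φ A * A ^ (-β)) / (δ₁ - β)) := by
            apply ENNReal.ofReal_le_ofReal
            have hIval : (∫ u in Ioo s 1, c * u ^ (β - δ₁ - 1))
                = c * ((1 - s ^ (β - δ₁)) / (β - δ₁)) := by
              rw [MeasureTheory.integral_const_mul]
              congr 1
              rw [← MeasureTheory.integral_Ioc_eq_integral_Ioo,
                ← intervalIntegral.integral_of_le hs1.le]
              rw [integral_rpow]
              · rw [show β - δ₁ - 1 + 1 = β - δ₁ from by ring, Real.one_rpow]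
              · right
                constructor
                · exact fun h => hδβ.ne' (by linarith)
                · rw [uIcc_of_le hs1.le]
                  rintro ⟨h0, -⟩
                  exact absurd h0 (not_le.2 hs)
            rw [hIval]
            have hX : s ^ (β - δ₁) = A ^ (δ₁ - β) := by
              rw [hsdef, Real.inv_rpow hA.le, ← Real.rpow_neg hA.le]
              congr 1
              ring
            have h1 : (1 - s ^ (β - δ₁)) / (β - δ₁) = (s ^ (β - δ₁) - 1) / (δ₁ - β) := by
              rw [div_eq_div_iff (by intro h; exact hδβ.ne' (by linarith)) hδβ.ne']
              ring
            have h2 : (s ^ (β - δ₁) - 1) / (δ₁ - β) ≤ s ^ (β - δ₁) / (δ₁ - β) := by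
              gcongr
              linarith
            have hcA : c * A ^ (δ₁ - β) = a₁⁻¹ * (Φ A * A ^ (-β)) := by
              rw [hcdef, mul_assoc, ← Real.rpow_add hA,
                show -δ₁ + (δ₁ - β) = -β from by ring]
              ring
            calc c * ((1 - s ^ (β - δ₁)) / (β - δ₁))
                = c * ((s ^ (β - δ₁) - 1) / (δ₁ - β)) := by rw [h1]
              _ ≤ c * (s ^ (β - δ₁) / (δ₁ - β)) := mul_le_mul_of_nonneg_left h2 hc0
              _ = c * A ^ (δ₁ - β) / (δ₁ - β) := by rw [hX]; ring
              _ = a₁⁻¹ * (Φ A * A ^ (-β)) / (δ₁ - β) := by rw [hcA]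
  -- tail piece
  have htail : (∫⁻ u in Ici (1:ℝ), ENNReal.ofReal (G u))
      ≤ ENNReal.ofReal (∫ x in Ioo (0:ℝ) 1, Φ x / x) := by
    have e1 : (∫⁻ u in Ici (1:ℝ), ENNReal.ofReal (G u))
        = ∫⁻ u in Ioi (1:ℝ), ENNReal.ofReal (G u) :=
      (setLIntegral_congr (Ioi_ae_eq_Ici (a := (1:ℝ)))).symm
    rw [e1]
    have e2 : (∫⁻ u in Ioi (1:ℝ), ENNReal.ofReal (G u))
        ≤ ∫⁻ u in Ioi (1:ℝ), ENNReal.ofReal (Φ' u⁻¹ / u) := by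
      apply setLIntegral_mono' measurableSet_Ioi
      intro u hu
      apply ENNReal.ofReal_le_ofReal
      have h1 : (0:ℝ) < u := lt_trans one_pos hu
      simp only [hGdef]
      calc min (u ^ β) 1 * (Φ' u⁻¹ / u) ≤ 1 * (Φ' u⁻¹ / u) :=
            mul_le_mul_of_nonneg_right (min_le_right _ _) (div_nonneg (hΦ'nn _) h1.le)
        _ = Φ' u⁻¹ / u := one_mul _
    refine e2.trans (le_of_eq ?_)
    have himg : (fun x : ℝ => x⁻¹) '' Ioo (0:ℝ) 1 = Ioi 1 := by
      ext u
      simp only [mem_image, mem_Ioo, mem_Ioi]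
      constructor
      · rintro ⟨x, ⟨hx0, hx1⟩, rfl⟩
        exact (one_lt_inv₀ hx0).2 hx1
      · intro hu
        have hu0 : (0:ℝ) < u := lt_trans one_pos hu
        exact ⟨u⁻¹, ⟨inv_pos.2 hu0, (inv_lt_one₀ hu0).2 hu⟩, inv_inv u⟩
    have hder : ∀ x ∈ Ioo (0:ℝ) 1,
        HasDerivWithinAt (fun x : ℝ => x⁻¹) (-(x^2)⁻¹) (Ioo (0:ℝ) 1) x :=
      fun x hx => (hasDerivAt_inv hx.1.ne').hasDerivWithinAt
    have h := my_lintegral_image measurableSet_Ioo hder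
      (fun a _ b _ hab => inv_injective hab) (fun u => ENNReal.ofReal (Φ' u⁻¹ / u))
    rw [himg] at h
    rw [h, MeasureTheory.ofReal_integral_eq_lintegral_ofReal hC
      ((ae_restrict_iff' measurableSet_Ioo).2 (Filter.Eventually.of_forall
        (fun x hx => div_nonneg (hΦpos x hx.1).le hx.1.le)))]
    apply setLIntegral_congr_fun measurableSet_Ioo
    intro x hx
    have hx0 : (0:ℝ) < x := hx.1
    dsimp only
    rw [inv_inv, hΦ'eq x hx0]
    rw [show |-(x^2)⁻¹| = (x^2)⁻¹ from by rw [abs_neg, abs_inv, abs_pow, sq_abs],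
      ← ENNReal.ofReal_mul (by positivity)]
    congr 1
    field_simp
  -- assemble
  calc (∫⁻ y in Ioi (0:ℝ), ENNReal.ofReal
        (y ^ (d-1) * (min (y ^ β) 1 * (Φ' ((s + y)⁻¹) / (s + y) ^ d))))
      ≤ ∫⁻ y in Ioi (0:ℝ), ENNReal.ofReal (G (s + y)) := stepA
    _ = ∫⁻ u in Ioi s, ENNReal.ofReal (G u) := stepB.symm
    _ ≤ (∫⁻ u in Ioo s 1, ENNReal.ofReal (G u)) + ∫⁻ u in Ici (1:ℝ), ENNReal.ofReal (G u) := stepC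
    _ ≤ ENNReal.ofReal (a₁⁻¹ * (Φ A * A ^ (-β)) / (δ₁ - β))
        + ENNReal.ofReal (∫ x in Ioo (0:ℝ) 1, Φ x / x) := add_le_add hmid htail
    _ = ENNReal.ofReal (a₁⁻¹ * (Φ A * A ^ (-β)) / (δ₁ - β) + ∫ x in Ioo (0:ℝ) 1, Φ x / x) :=
        (ENNReal.ofReal_add hM0 hC0).symm

/-- Under weak lower scaling and `∫₀¹ Φ(r)/r dr < ∞`, for every `T ≥ 1`
there exists `c₁ > 0` such that for all `0 < t ≤ T`, `β ∈ [0, δ₁)` and `γ ∈ ℝ`: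
`∫_{ℝ^d} ρ_γ^β(t,x) dx ≤ (c₁/(δ₁−β)) t⁻¹ Φ⁻¹(t⁻¹)^{-γ−β}`. -/
theorem stmt_14 (d : ℕ) (hd : 1 ≤ d) (Φ Φinv : ℝ → ℝ) (a₁ δ₁ : ℝ)
    (hδ₁ : 0 < δ₁) (hδ₂ : δ₁ ≤ 2) (ha₁ : 0 < a₁) (ha₂ : a₁ < 1)
    (hΦpos : ∀ t : ℝ, 0 < t → 0 < Φ t)
    (hΦmono : ∀ s t : ℝ, 0 < s → s < t → Φ s < Φ t)
    (hΦ1 : Φ 1 = 1)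
    (hinvpos : ∀ r : ℝ, 0 < r → 0 < Φinv r)
    (hleft : ∀ t : ℝ, 0 < t → Φinv (Φ t) = t)
    (hright : ∀ r : ℝ, 0 < r → Φ (Φinv r) = r)
    (hup : ∀ lam r : ℝ, 1 ≤ lam → 0 < r → Φ (lam * r) ≤ lam ^ 2 * Φ r)
    (hlow : ∀ lam r : ℝ, 1 ≤ lam → 1 ≤ r → a₁ * lam ^ δ₁ * Φ r ≤ Φ (lam * r))
    (hC : IntegrableOn (fun r : ℝ => Φ r / r) (Ioo (0 : ℝ) 1))
    (T : ℝ) (hT : 1 ≤ T) :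
    ∃ c₁ : ℝ, 0 < c₁ ∧ ∀ t : ℝ, 0 < t → t ≤ T → ∀ β γ : ℝ, 0 ≤ β → β < δ₁ →
      (∫ x : EuclideanSpace ℝ (Fin d), rhogb d Φ Φinv γ β t x) ≤
        c₁ / (δ₁ - β) * (t⁻¹ * Φinv t⁻¹ ^ (-γ - β)) := by
  have hd0 : (0:ℝ) < (d:ℝ) := by exact_mod_cast Nat.lt_of_lt_of_le Nat.zero_lt_one hd
  set C : ℝ := ∫ x in Ioo (0:ℝ) 1, Φ x / x with hCdef
  have hC0 : 0 ≤ C :=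
    setIntegral_nonneg measurableSet_Ioo (fun x hx => div_nonneg (hΦpos x hx.1).le hx.1.le)
  set κ : ℝ := (volume (Metric.ball (0 : EuclideanSpace ℝ (Fin d)) 1)).toReal with hκdef
  have hκ : 0 < κ :=
    ENNReal.toReal_pos (Metric.measure_ball_pos volume 0 one_pos).ne' measure_ball_lt_top.ne
  have hT0 : (0:ℝ) < T := lt_of_lt_of_le one_pos hT
  set K : ℝ := min a₁ T⁻¹ with hKdef
  have hK : 0 < K := lt_min ha₁ (inv_pos.2 hT0)
  refine ⟨(d:ℝ) * κ * (a₁⁻¹ + 2 * C / K), by positivity, ?_⟩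
  intro t ht htT β γ hβ hβδ
  have htinv : 0 < t⁻¹ := inv_pos.2 ht
  have hδβ : 0 < δ₁ - β := sub_pos.2 hβδ
  set A : ℝ := Φinv t⁻¹ with hAdef
  have hA : 0 < A := hinvpos _ htinv
  have hΦA : Φ A = t⁻¹ := hright _ htinv
  -- key lower bound on t⁻¹ * A^(-β)
  have hKey : K ≤ t⁻¹ * A ^ (-β) := by
    rcases le_or_gt 1 A with h1A | hA1
    · have h1 := hlow A 1 h1A le_rfl
      rw [mul_one, hΦ1, mul_one] at h1
      have h2 : a₁ * A ^ δ₁ * A ^ (-β) ≤ Φ A * A ^ (-β) :=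
        mul_le_mul_of_nonneg_right h1 (Real.rpow_pos_of_pos hA _).le
      have h3 : a₁ * A ^ δ₁ * A ^ (-β) = a₁ * A ^ (δ₁ - β) := by
        rw [mul_assoc, ← Real.rpow_add hA, show δ₁ + -β = δ₁ - β from by ring]
      have h4 : (1:ℝ) ≤ A ^ (δ₁ - β) := by
        calc (1:ℝ) = A ^ (0:ℝ) := (Real.rpow_zero A).symm
          _ ≤ A ^ (δ₁ - β) := Real.rpow_le_rpow_of_exponent_le h1A hδβ.le
      have h5 : a₁ ≤ a₁ * A ^ (δ₁ - β) := le_mul_of_one_le_right ha₁.le h4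
      rw [h3] at h2
      rw [← hΦA]
      calc K ≤ a₁ := min_le_left _ _
        _ ≤ Φ A * A ^ (-β) := le_trans h5 h2
    · have h1 : (1:ℝ) ≤ A ^ (-β) := by
        rw [Real.rpow_neg hA.le]
        exact one_le_inv₀ (Real.rpow_pos_of_pos hA β) |>.2
          (Real.rpow_le_one hA.le hA1.le hβ)
      have h2 : T⁻¹ ≤ t⁻¹ := inv_anti₀ ht htT
      calc K ≤ T⁻¹ := min_le_right _ _
        _ = T⁻¹ * 1 := (mul_one _).symm
        _ ≤ t⁻¹ * A ^ (-β) := mul_le_mul h2 h1 one_pos.le htinv.le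
  -- reduce to the 1-d integral
  have h1 : (∫ x : EuclideanSpace ℝ (Fin d), rhogb d Φ Φinv γ β t x)
      = A ^ (-γ) * ∫ x : EuclideanSpace ℝ (Fin d),
          (fun y : ℝ => min (y ^ β) 1 * (Φ ((A⁻¹ + y)⁻¹) / (A⁻¹ + y) ^ d)) ‖x‖ := by
    rw [← MeasureTheory.integral_const_mul]
    refine integral_congr_ae (Filter.Eventually.of_forall fun x => ?_)
    simp only [rhogb]
    rw [← hAdef]
    ring
  have h2 := my_polar d hd (fun y : ℝ => min (y ^ β) 1 * (Φ ((A⁻¹ + y)⁻¹) / (A⁻¹ + y) ^ d))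
  have hJ := my_core d hd Φ a₁ δ₁ ha₁ hΦpos hΦmono hlow hC A hA β hβ hβδ
  rw [hΦA, ← hCdef] at hJ
  rw [h1, h2, ← hκdef]
  beta_reduce
  set J : ℝ := ∫ y in Ioi (0:ℝ),
      y ^ (d-1) * (min (y ^ β) 1 * (Φ ((A⁻¹ + y)⁻¹) / (A⁻¹ + y) ^ d)) with hJdef
  -- arithmetic conclusion
  set P : ℝ := t⁻¹ * A ^ (-β) with hPdef
  have hP0 : 0 < P := mul_pos htinv (Real.rpow_pos_of_pos hA _)
  have hstep : J ≤ (a₁⁻¹ + 2 * C / K) * P / (δ₁ - β) := by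
    refine hJ.trans ?_
    have hCP : C ≤ 2 * C / K * P / (δ₁ - β) := by
      have hq : K / 2 ≤ P / (δ₁ - β) := by
        rw [div_le_div_iff₀ two_pos hδβ]
        nlinarith [hKey, hK.le, hP0.le]
      calc C = 2 * C / K * (K / 2) := by field_simp
        _ ≤ 2 * C / K * (P / (δ₁ - β)) :=
            mul_le_mul_of_nonneg_left hq (by positivity)
        _ = 2 * C / K * P / (δ₁ - β) := by ring
    calc a₁⁻¹ * P / (δ₁ - β) + C ≤ a₁⁻¹ * P / (δ₁ - β) + 2 * C / K * P / (δ₁ - β) := by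
          linarith
      _ = (a₁⁻¹ + 2 * C / K) * P / (δ₁ - β) := by ring
  have hrpow : A ^ (-γ - β) = A ^ (-γ) * A ^ (-β) := by
    rw [show -γ - β = -γ + -β from by ring, Real.rpow_add hA]
  have hRγ : 0 < A ^ (-γ) := Real.rpow_pos_of_pos hA _
  calc A ^ (-γ) * ((d:ℝ) * (κ * J))
      ≤ A ^ (-γ) * ((d:ℝ) * (κ * ((a₁⁻¹ + 2 * C / K) * P / (δ₁ - β)))) := by
        apply mul_le_mul_of_nonneg_left _ hRγ.le
        apply mul_le_mul_of_nonneg_left _ hd0.le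
        exact mul_le_mul_of_nonneg_left hstep hκ.le
    _ = (d:ℝ) * κ * (a₁⁻¹ + 2 * C / K) / (δ₁ - β) * (t⁻¹ * A ^ (-γ - β)) := by
        rw [hrpow, hPdef]
        ring
end

section
/- Let j(r) = ∫_{(0,∞)} (4πt)^{-d/2} e^{-r²/(4t)} μ(dt) be the Lévy density of the subordinate Brownian motion with subordinator Laplace exponent φ (Lévy measure μ). Then there exists a constant c = c(d) > 0 such that j(r) ≤ c φ(r^{-2})/r^d for all r > 0; moreover r ↦ j(r) is nonincreasing. -/
open Real MeasureTheory Set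
open scoped ENNReal

lemma aux_key (d : ℕ) (s : ℝ) (hs : 0 < s) :
    (4 * π * s) ^ (-(d : ℝ) / 2) * Real.exp (-(1 / (4 * s))) ≤
      (3 * (d + 1).factorial * 4 ^ (d + 1)) * (1 - Real.exp (-s)) := by
  set C : ℝ := 3 * (d + 1).factorial * 4 ^ (d + 1) with hC
  have h1f : (1:ℝ) ≤ ((d+1).factorial : ℝ) := by
    exact_mod_cast Nat.one_le_iff_ne_zero.mpr (d+1).factorial_ne_zero
  have h4 : (1:ℝ) ≤ (4:ℝ) ^ (d+1) := one_le_pow₀ (by norm_num)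
  have hC2 : (2:ℝ) ≤ C := by nlinarith
  have hπ : (1:ℝ) ≤ 4 * π := by nlinarith [pi_gt_three]
  have hdnn : (0:ℝ) ≤ (d:ℝ) := Nat.cast_nonneg d
  have hexpneg : -(d:ℝ)/2 ≤ 0 := by linarith
  rcases le_or_gt 1 s with h1 | h1
  · -- s ≥ 1
    have hbase : (1:ℝ) ≤ 4 * π * s := by nlinarith
    have hrp : (4 * π * s) ^ (-(d:ℝ)/2) ≤ 1 :=
      Real.rpow_le_one_of_one_le_of_nonpos hbase hexpneg
    have hex : Real.exp (-(1 / (4 * s))) ≤ 1 := by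
      have : (0:ℝ) < 1/(4*s) := by positivity
      exact Real.exp_le_one_iff.2 (by linarith)
    have h2 : 1 - Real.exp (-s) ≥ 1/2 := by
      have hmono : Real.exp (-s) ≤ Real.exp (-1) := Real.exp_le_exp.2 (by linarith)
      have he : Real.exp (-1) ≤ 1/2 := by
        rw [Real.exp_neg, inv_le_comm₀ (Real.exp_pos 1) (by norm_num)]
        nlinarith [Real.add_one_le_exp (1:ℝ)]
      linarith
    have hl : (4 * π * s) ^ (-(d:ℝ)/2) * Real.exp (-(1 / (4 * s))) ≤ 1 := by
      nlinarith [Real.exp_pos (-(1/(4*s))), Real.rpow_nonneg (le_trans zero_le_one hbase) (-(d:ℝ)/2)]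
    nlinarith
  · -- s < 1
    have hss : s ≤ 1 := h1.le
    have hlow : s / 3 ≤ 1 - Real.exp (-s) := by
      have he3 : (1:ℝ)/3 ≤ Real.exp (-s) := by
        have hmono : Real.exp (-1) ≤ Real.exp (-s) := Real.exp_le_exp.2 (by linarith)
        have h3 : (1:ℝ)/3 ≤ Real.exp (-1) := by
          rw [Real.exp_neg, le_inv_comm₀ (by norm_num) (Real.exp_pos 1)]
          calc Real.exp 1 ≤ 2.7182818286 := Real.exp_one_lt_d9.le
            _ ≤ ((1:ℝ)/3)⁻¹ := by norm_num
        linarith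
      have key : (1 + s) * Real.exp (-s) ≤ 1 := by
        rw [Real.exp_neg, mul_inv_le_iff₀ (Real.exp_pos s)]
        linarith [Real.add_one_le_exp s]
      nlinarith [Real.exp_pos (-s)]
    have hexp : Real.exp (-(1 / (4 * s))) ≤ ((d+1).factorial : ℝ) * (4*s)^(d+1) := by
      have hx : (0:ℝ) ≤ 1/(4*s) := by positivity
      have hpf := Real.pow_div_factorial_le_exp (1/(4*s)) hx (d+1)
      rw [Real.exp_neg, inv_le_comm₀ (Real.exp_pos _) (by positivity)]
      calc (((d+1).factorial : ℝ) * (4*s)^(d+1))⁻¹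
          = (1/(4*s))^(d+1) / (d+1).factorial := by
            rw [div_pow, one_pow]
            field_simp
        _ ≤ Real.exp (1/(4*s)) := hpf
    have hrp : (4 * π * s) ^ (-(d:ℝ)/2) ≤ s ^ (-(d:ℝ)/2) :=
      Real.rpow_le_rpow_of_nonpos hs (by nlinarith) hexpneg
    have hpow : s ^ (-(d:ℝ)/2) * s^(d+1) ≤ s := by
      have heq : s ^ (-(d:ℝ)/2) * s^(d+1) = s ^ ((d:ℝ)/2 + 1) := by
        rw [← Real.rpow_natCast s (d+1), ← Real.rpow_add hs]
        congr 1
        push_cast; ring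
      rw [heq]
      calc s ^ ((d:ℝ)/2 + 1) ≤ s ^ (1:ℝ) :=
            Real.rpow_le_rpow_of_exponent_ge hs hss (by linarith)
        _ = s := Real.rpow_one s
    have hsnn : (0:ℝ) ≤ s ^ (-(d:ℝ)/2) := Real.rpow_nonneg hs.le _
    have step1 : (4 * π * s) ^ (-(d:ℝ)/2) * Real.exp (-(1 / (4 * s))) ≤
        s ^ (-(d:ℝ)/2) * (((d+1).factorial : ℝ) * (4*s)^(d+1)) :=
      mul_le_mul hrp hexp (Real.exp_pos _).le hsnn
    have step2 : s ^ (-(d:ℝ)/2) * (((d+1).factorial : ℝ) * (4*s)^(d+1)) =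
        ((d+1).factorial : ℝ) * 4^(d+1) * (s ^ (-(d:ℝ)/2) * s^(d+1)) := by
      rw [mul_pow]; ring
    calc (4 * π * s) ^ (-(d:ℝ)/2) * Real.exp (-(1 / (4 * s)))
        ≤ ((d+1).factorial : ℝ) * 4^(d+1) * (s ^ (-(d:ℝ)/2) * s^(d+1)) := by
          rw [← step2]; exact step1
      _ ≤ ((d+1).factorial : ℝ) * 4^(d+1) * s :=
          mul_le_mul_of_nonneg_left hpow (by positivity)
      _ ≤ ((d+1).factorial : ℝ) * 4^(d+1) * (3 * (1 - Real.exp (-s))) :=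
          mul_le_mul_of_nonneg_left (by linarith) (by positivity)
      _ = C * (1 - Real.exp (-s)) := by rw [hC]; ring


/-- Let `j(r) = ∫_{(0,∞)} (4πt)^{-d/2} e^{-r²/(4t)} μ(dt)` be the Lévy
density of the subordinate Brownian motion whose subordinator has Laplace exponent
`φ(λ) = ∫_{(0,∞)}(1 − e^{-λt}) μ(dt)`. Then there exists `c = c(d) > 0` such that
`j(r) ≤ c φ(r^{-2})/r^d` for all `r > 0`; moreover `r ↦ j(r)` is nonincreasing. -/
theorem stmt_16 (d : ℕ) (hd : 1 ≤ d) (μ : Measure ℝ) (φ : ℝ → ℝ) (j : ℝ → ℝ≥0∞)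
    (hμ : ∫⁻ t in Ioi (0 : ℝ), ENNReal.ofReal (min t 1) ∂μ < ⊤)
    (hφ : ∀ l : ℝ, 0 < l → φ l = ∫ t in Ioi (0 : ℝ), (1 - Real.exp (-(l * t))) ∂μ)
    (hj : ∀ r : ℝ, 0 < r →
      j r = ∫⁻ t in Ioi (0 : ℝ),
        ENNReal.ofReal ((4 * π * t) ^ (-(d : ℝ) / 2) * Real.exp (-(r ^ 2) / (4 * t))) ∂μ) :
    (∃ c : ℝ, 0 < c ∧ ∀ r : ℝ, 0 < r →
        j r ≤ ENNReal.ofReal (c * φ ((r ^ 2)⁻¹) / r ^ d)) ∧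
    (∀ r s : ℝ, 0 < r → r ≤ s → j s ≤ j r) := by
  constructor
  · -- upper bound
    set C : ℝ := 3 * (d + 1).factorial * 4 ^ (d + 1) with hCdef
    have hCpos : 0 < C := by positivity
    refine ⟨C, hCpos, fun r hr => ?_⟩
    set l : ℝ := (r ^ 2)⁻¹ with hl
    have hlpos : 0 < l := by positivity
    -- pointwise bound
    have hpt : ∀ t ∈ Ioi (0:ℝ),
        (4 * π * t) ^ (-(d : ℝ) / 2) * Real.exp (-(r ^ 2) / (4 * t)) ≤
          C / r ^ d * (1 - Real.exp (-(l * t))) := by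
      intro t ht
      have ht : 0 < t := ht
      set s : ℝ := t / r ^ 2 with hsdef
      have hs : 0 < s := by positivity
      have hlt : l * t = s := by rw [hl, hsdef]; ring
      have h4t : 4 * π * t = (4 * π * s) * r ^ 2 := by
        rw [hsdef]; field_simp
      have hrpow : (4 * π * t) ^ (-(d : ℝ) / 2)
          = (4 * π * s) ^ (-(d : ℝ) / 2) * (r ^ d)⁻¹ := by
        rw [h4t, Real.mul_rpow (by positivity) (by positivity)]
        congr 1
        rw [← Real.rpow_natCast r 2, ← Real.rpow_natCast r d,
          ← Real.rpow_mul hr.le, ← Real.rpow_neg hr.le]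
        congr 1
        push_cast; ring
      have hexparg : -(r ^ 2) / (4 * t) = -(1 / (4 * s)) := by
        rw [hsdef]; field_simp
      rw [hrpow, hexparg]
      have hkey := aux_key d s hs
      calc (4 * π * s) ^ (-(d : ℝ) / 2) * (r ^ d)⁻¹ * Real.exp (-(1 / (4 * s)))
          = ((4 * π * s) ^ (-(d : ℝ) / 2) * Real.exp (-(1 / (4 * s)))) * (r ^ d)⁻¹ := by ring
        _ ≤ (C * (1 - Real.exp (-s))) * (r ^ d)⁻¹ := by
            apply mul_le_mul_of_nonneg_right _ (by positivity)
            exact hkey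
        _ = C / r ^ d * (1 - Real.exp (-(l * t))) := by rw [hlt]; ring
    -- integrability of g
    set g : ℝ → ℝ := fun t => 1 - Real.exp (-(l * t)) with hg
    have hgnn : ∀ t ∈ Ioi (0:ℝ), 0 ≤ g t := by
      intro t ht
      have htp : (0:ℝ) < t := ht
      have h1 : Real.exp (-(l * t)) ≤ 1 := Real.exp_le_one_iff.2 (by nlinarith)
      simp only [hg]
      linarith
    have hgnn' : 0 ≤ᵐ[μ.restrict (Ioi 0)] g :=
      (ae_restrict_mem measurableSet_Ioi).mono hgnn
    have hgbound : ∀ t ∈ Ioi (0:ℝ),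
        ENNReal.ofReal (g t) ≤ ENNReal.ofReal (max l 1) * ENNReal.ofReal (min t 1) := by
      intro t ht
      have ht : 0 < t := ht
      rw [← ENNReal.ofReal_mul (le_max_right l 1 |>.trans' zero_le_one)]
      apply ENNReal.ofReal_le_ofReal
      have hexp1 : 1 - l * t ≤ Real.exp (-(l * t)) := by
        have := Real.add_one_le_exp (-(l * t)); linarith
      rcases le_total t 1 with h | h
      · have : min t 1 = t := min_eq_left h
        rw [this]
        have : g t ≤ l * t := by simp only [hg]; linarith
        calc g t ≤ l * t := this
          _ ≤ max l 1 * t := mul_le_mul_of_nonneg_right (le_max_left l 1) ht.le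
      · have hm : min t 1 = 1 := min_eq_right h
        rw [hm, mul_one]
        have : g t ≤ 1 := by
          simp only [hg]
          have := (Real.exp_pos (-(l * t))).le
          linarith
        exact this.trans (le_max_right l 1)
    have hgint : Integrable g (μ.restrict (Ioi 0)) := by
      constructor
      · exact (Continuous.aestronglyMeasurable (by fun_prop))
      · rw [hasFiniteIntegral_iff_ofReal hgnn']
        calc ∫⁻ t in Ioi (0:ℝ), ENNReal.ofReal (g t) ∂μ
            ≤ ∫⁻ t in Ioi (0:ℝ), ENNReal.ofReal (max l 1) * ENNReal.ofReal (min t 1) ∂μ := by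
              apply lintegral_mono_ae
              exact (ae_restrict_mem measurableSet_Ioi).mono hgbound
          _ = ENNReal.ofReal (max l 1) * ∫⁻ t in Ioi (0:ℝ), ENNReal.ofReal (min t 1) ∂μ :=
              lintegral_const_mul' _ _ ENNReal.ofReal_ne_top
          _ < ⊤ := ENNReal.mul_lt_top ENNReal.ofReal_lt_top hμ
    -- main estimate
    have hφl : ENNReal.ofReal (φ l) = ∫⁻ t in Ioi (0:ℝ), ENNReal.ofReal (g t) ∂μ := by
      rw [hφ l hlpos]
      exact ofReal_integral_eq_lintegral_ofReal hgint hgnn'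
    calc j r = ∫⁻ t in Ioi (0:ℝ),
          ENNReal.ofReal ((4 * π * t) ^ (-(d : ℝ) / 2) * Real.exp (-(r ^ 2) / (4 * t))) ∂μ :=
          hj r hr
      _ ≤ ∫⁻ t in Ioi (0:ℝ), ENNReal.ofReal (C / r ^ d * g t) ∂μ := by
          apply lintegral_mono_ae
          exact (ae_restrict_mem measurableSet_Ioi).mono fun t ht =>
            ENNReal.ofReal_le_ofReal (hpt t ht)
      _ = ∫⁻ t in Ioi (0:ℝ), ENNReal.ofReal (C / r ^ d) * ENNReal.ofReal (g t) ∂μ := by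
          apply lintegral_congr
          intro t
          rw [ENNReal.ofReal_mul (by positivity)]
      _ = ENNReal.ofReal (C / r ^ d) * ∫⁻ t in Ioi (0:ℝ), ENNReal.ofReal (g t) ∂μ :=
          lintegral_const_mul' _ _ ENNReal.ofReal_ne_top
      _ = ENNReal.ofReal (C / r ^ d) * ENNReal.ofReal (φ l) := by rw [hφl]
      _ = ENNReal.ofReal (C / r ^ d * φ l) := (ENNReal.ofReal_mul (by positivity)).symm
      _ = ENNReal.ofReal (C * φ ((r ^ 2)⁻¹) / r ^ d) := by rw [hl]; ring_nf
  · -- monotonicity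
    intro r s hr hrs
    have hs : 0 < s := lt_of_lt_of_le hr hrs
    rw [hj r hr, hj s hs]
    apply lintegral_mono_ae
    refine (ae_restrict_mem measurableSet_Ioi).mono fun t ht => ?_
    have ht : 0 < t := ht
    apply ENNReal.ofReal_le_ofReal
    apply mul_le_mul_of_nonneg_left _ (Real.rpow_nonneg (by positivity) _)
    apply Real.exp_le_exp.2
    have h2 : r ^ 2 ≤ s ^ 2 := by nlinarith
    have : -(s ^ 2) ≤ -(r ^ 2) := by linarith
    apply div_le_div_of_nonneg_right this (by positivity)
end
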